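/- arXiv:2603.25076 — 3 statements merged into one kernel-verified Lean document; each statement's English description precedes it below -/
import Mathlib

section
/- For real s > 1, the prime zeta function satisfies P(s) = ∑_{n=1}^∞ (μ(n)/n) · log ζ(ns), where μ is the Möbius function and ζ is the Riemann zeta function. -/
/-- The prime zeta function `P(s) = ∑_p p^{-s}` for real `s`. -/
noncomputable def primeZeta (s : ℝ) : ℝ := ∑' p : Nat.Primes, 1 / (p : ℝ) ^ s

namespace PZAux

open ArithmeticFunction

/-- `Q t = ∑_p p^{-t}` with rpow of negative exponent. -/
noncomputable def Q (t : ℝ) : ℝ := ∑' p : Nat.Primes, (p : ℝ) ^ (-t)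

lemma primeZeta_eq_Q (s : ℝ) : primeZeta s = Q s := by
  refine tsum_congr fun p ↦ ?_
  have hp : (0:ℝ) < (p : ℕ) := by exact_mod_cast p.prop.pos
  rw [Real.rpow_neg hp.le, one_div]

lemma two_le (p : Nat.Primes) : (2:ℝ) ≤ (p : ℕ) := by exact_mod_cast p.prop.two_le

lemma xp_pos (p : Nat.Primes) (t : ℝ) : 0 < ((p : ℕ) : ℝ) ^ (-t) :=
  Real.rpow_pos_of_pos (by linarith [two_le p]) _

lemma rpow_anti {a b r : ℝ} (hb : 0 < b) (hba : b ≤ a) (hr : r ≤ 0) : a ^ r ≤ b ^ r := by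
  rw [← neg_neg r, Real.rpow_neg (by linarith), Real.rpow_neg hb.le]
  exact inv_anti₀ (Real.rpow_pos_of_pos hb _)
    (Real.rpow_le_rpow hb.le hba (by linarith))

lemma xp_le_half (p : Nat.Primes) {t : ℝ} (ht : 1 ≤ t) : ((p : ℕ) : ℝ) ^ (-t) ≤ 1/2 := by
  have h1 : ((p : ℕ) : ℝ) ^ (-t) ≤ (2:ℝ) ^ (-t) := rpow_anti two_pos (two_le p) (by linarith)
  have h2 : (2:ℝ) ^ (-t) ≤ (2:ℝ) ^ (-1 : ℝ) :=
    Real.rpow_le_rpow_of_exponent_le one_le_two (by linarith)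
  have h3 : (2:ℝ) ^ (-1:ℝ) = 1/2 := by
    rw [Real.rpow_neg_one]; norm_num
  rw [h3] at h2; linarith

lemma one_sub_xp_pos (p : Nat.Primes) {t : ℝ} (ht : 1 ≤ t) : 0 < 1 - ((p : ℕ) : ℝ) ^ (-t) := by
  have := xp_le_half p ht; linarith

lemma neg_log_nonneg {x : ℝ} (h0 : 0 ≤ x) (h1 : x < 1) : 0 ≤ -Real.log (1 - x) := by
  have := Real.log_nonpos (x := 1 - x) (by linarith) (by linarith); linarith

lemma neg_log_le {x : ℝ} (h0 : 0 ≤ x) (h1 : x ≤ 1/2) : -Real.log (1 - x) ≤ 2 * x := by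
  have hx : 0 < 1 - x := by linarith
  rw [← Real.log_inv]
  have h2 := Real.log_le_sub_one_of_pos (inv_pos.mpr hx)
  have h3 : (1 - x)⁻¹ - 1 = x / (1 - x) := by field_simp; ring
  have h4 : x / (1 - x) ≤ 2 * x := by
    rw [div_le_iff₀ hx]; nlinarith
  linarith

lemma summable_Q {t : ℝ} (ht : 1 < t) : Summable (fun p : Nat.Primes ↦ ((p : ℕ) : ℝ) ^ (-t)) :=
  Nat.Primes.summable_rpow.mpr (by linarith)

lemma Q_nonneg (t : ℝ) : 0 ≤ Q t := tsum_nonneg fun p ↦ (xp_pos p t).le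

/-- `S t = ∑_p -log(1 - p^{-t}) = log ζ(t)`. -/
noncomputable def S (t : ℝ) : ℝ := ∑' p : Nat.Primes, -Real.log (1 - ((p : ℕ) : ℝ) ^ (-t))

lemma summable_S {t : ℝ} (ht : 1 < t) :
    Summable (fun p : Nat.Primes ↦ -Real.log (1 - ((p : ℕ) : ℝ) ^ (-t))) := by
  refine Summable.of_nonneg_of_le
    (fun p ↦ neg_log_nonneg (xp_pos p t).le (by have := xp_le_half p ht.le; linarith))
    (fun p ↦ neg_log_le (xp_pos p t).le (xp_le_half p ht.le)) (((summable_Q ht)).mul_left 2)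

lemma S_le {t : ℝ} (ht : 1 < t) : S t ≤ 2 * Q t := by
  have h : S t ≤ ∑' p : Nat.Primes, 2 * (((p : ℕ) : ℝ) ^ (-t)) :=
    Summable.tsum_le_tsum (fun p ↦ neg_log_le (xp_pos p t).le (xp_le_half p ht.le))
      (summable_S ht) ((summable_Q ht).mul_left 2)
  rwa [tsum_mul_left] at h

lemma S_nonneg {t : ℝ} (ht : 1 < t) : 0 ≤ S t :=
  tsum_nonneg fun p ↦ neg_log_nonneg (xp_pos p t).le
    (by have := xp_le_half p ht.le; linarith)

lemma Q_le {t u : ℝ} (ht : 1 < t) (htu : t ≤ u) : Q u ≤ (2:ℝ) ^ (t - u) * Q t := by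
  have h : ∀ p : Nat.Primes, ((p : ℕ) : ℝ) ^ (-u) ≤ (2:ℝ) ^ (t - u) * ((p : ℕ) : ℝ) ^ (-t) := by
    intro p
    have hp : (0:ℝ) < (p : ℕ) := by linarith [two_le p]
    have e : ((p : ℕ) : ℝ) ^ (-u) = ((p : ℕ) : ℝ) ^ (t - u) * ((p : ℕ) : ℝ) ^ (-t) := by
      rw [← Real.rpow_add hp]; ring_nf
    rw [e]
    have := rpow_anti two_pos (two_le p) (by linarith : t - u ≤ 0)
    exact mul_le_mul_of_nonneg_right this (xp_pos p t).le
  have hsum : Summable (fun p : Nat.Primes ↦ ((p : ℕ) : ℝ) ^ (-u)) :=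
    summable_Q (by linarith)
  have h2 : Q u ≤ ∑' p : Nat.Primes, (2:ℝ) ^ (t - u) * ((p : ℕ) : ℝ) ^ (-t) :=
    Summable.tsum_le_tsum h hsum ((summable_Q ht).mul_left _)
  rwa [tsum_mul_left] at h2

/-- Expansion `-log(1-p^{-t}) = ∑_{m ≥ 1} p^{-mt}/m`. -/
lemma hasSum_neg_log (p : Nat.Primes) {t : ℝ} (ht : 1 < t) :
    HasSum (fun m : ℕ+ ↦ ((p : ℕ) : ℝ) ^ (-(((m : ℕ) : ℝ) * t)) / ((m : ℕ) : ℝ))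
      (-Real.log (1 - ((p : ℕ) : ℝ) ^ (-t))) := by
  set x : ℝ := ((p : ℕ) : ℝ) ^ (-t) with hx
  have hp : (0:ℝ) < (p : ℕ) := by linarith [two_le p]
  have hx0 : 0 < x := xp_pos p t
  have hx1 : |x| < 1 := by
    rw [abs_of_pos hx0]
    have := xp_le_half p ht.le; linarith
  have H := Real.hasSum_pow_div_log_of_abs_lt_one hx1
  have hfe : (fun n : ℕ ↦ x ^ (n + 1) / ((n : ℝ) + 1))
      = ((fun m : ℕ+ ↦ x ^ (m : ℕ) / ((m : ℕ) : ℝ)) ∘ ⇑Equiv.pnatEquivNat.symm) := by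
    funext n
    simp only [Function.comp_apply, Equiv.pnatEquivNat_symm_apply, Nat.succPNat_coe]
    push_cast
    rw [pow_succ]
  have key : HasSum ((fun m : ℕ+ ↦ x ^ (m : ℕ) / ((m : ℕ) : ℝ)) ∘ ⇑Equiv.pnatEquivNat.symm)
      (-Real.log (1 - x)) := by
    rw [← hfe]; exact H
  have H2 : HasSum (fun m : ℕ+ ↦ x ^ (m : ℕ) / ((m : ℕ) : ℝ)) (-Real.log (1 - x)) :=
    (Equiv.pnatEquivNat.symm.hasSum_iff).mp key
  refine H2.congr_fun fun m ↦ ?_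
  congr 1
  rw [hx, ← Real.rpow_natCast (((p : ℕ) : ℝ) ^ (-t)) (m : ℕ), ← Real.rpow_mul hp.le]
  ring_nf

lemma summable_pair {t : ℝ} (ht : 1 < t) :
    Summable (fun q : Nat.Primes × ℕ+ ↦
      ((q.1 : ℕ) : ℝ) ^ (-(((q.2 : ℕ) : ℝ) * t)) / ((q.2 : ℕ) : ℝ)) := by
  rw [summable_prod_of_nonneg (fun q ↦ by positivity)]
  constructor
  · exact fun p ↦ (hasSum_neg_log p ht).summable
  · refine Summable.congr (summable_S ht) fun p ↦ ?_
    exact ((hasSum_neg_log p ht).tsum_eq).symm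

lemma one_lt_mul_t {t : ℝ} (ht : 1 < t) (m : ℕ+) : 1 < ((m : ℕ) : ℝ) * t := by
  have h1 : (1:ℝ) ≤ ((m : ℕ) : ℝ) := by exact_mod_cast m.one_le
  nlinarith

lemma S_eq {t : ℝ} (ht : 1 < t) : S t = ∑' m : ℕ+, Q (((m : ℕ) : ℝ) * t) / ((m : ℕ) : ℝ) := by
  have hswap := Summable.tsum_comm' (f := fun (p : Nat.Primes) (m : ℕ+) ↦
      ((p : ℕ) : ℝ) ^ (-(((m : ℕ) : ℝ) * t)) / ((m : ℕ) : ℝ))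
    (summable_pair ht) (fun p ↦ (hasSum_neg_log p ht).summable)
    (fun m ↦ (summable_Q (one_lt_mul_t ht m)).div_const _)
  calc S t = ∑' (p : Nat.Primes) (m : ℕ+),
        ((p : ℕ) : ℝ) ^ (-(((m : ℕ) : ℝ) * t)) / ((m : ℕ) : ℝ) :=
      tsum_congr fun p ↦ ((hasSum_neg_log p ht).tsum_eq).symm
    _ = ∑' (m : ℕ+) (p : Nat.Primes),
        ((p : ℕ) : ℝ) ^ (-(((m : ℕ) : ℝ) * t)) / ((m : ℕ) : ℝ) := hswap.symm
    _ = ∑' m : ℕ+, Q (((m : ℕ) : ℝ) * t) / ((m : ℕ) : ℝ) := by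
      refine tsum_congr fun m ↦ ?_
      rw [Q, tsum_div_const]

lemma summable_Qm {t : ℝ} (ht : 1 < t) :
    Summable (fun m : ℕ+ ↦ Q (((m : ℕ) : ℝ) * t) / ((m : ℕ) : ℝ)) := by
  have h := ((Equiv.prodComm ℕ+ Nat.Primes).summable_iff
    (f := fun q : Nat.Primes × ℕ+ ↦
      ((q.1 : ℕ) : ℝ) ^ (-(((q.2 : ℕ) : ℝ) * t)) / ((q.2 : ℕ) : ℝ))).mpr (summable_pair ht)
  have h2 := h.prod
  refine h2.congr fun m ↦ ?_
  simp only [Function.comp_apply, Equiv.prodComm_apply, Prod.swap_prod_mk]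
  rw [Q, tsum_div_const]

/-- The complex logarithm of `ζ(t)` for real `t > 1` is the real number `S t`. -/
lemma clog_zeta {t : ℝ} (ht : 1 < t) : Complex.log (riemannZeta (t : ℂ)) = ((S t : ℝ) : ℂ) := by
  have h2 := riemannZeta_eulerProduct_exp_log (s := (t : ℂ)) (by simpa using ht)
  have h1 : (∑' p : Nat.Primes, -Complex.log (1 - (p : ℂ) ^ (-(t : ℂ)))) = ((S t : ℝ) : ℂ) := by
    rw [S, Complex.ofReal_tsum]
    refine tsum_congr fun p ↦ ?_
    have hp0 : (0:ℝ) ≤ ((p : ℕ) : ℝ) := by linarith [two_le p]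
    have hx := one_sub_xp_pos p ht.le
    have e1 : (p : ℂ) ^ (-(t : ℂ)) = ((((p : ℕ) : ℝ) ^ (-t) : ℝ) : ℂ) := by
      rw [Complex.ofReal_cpow hp0]
      push_cast
      rfl
    rw [e1, ← Complex.ofReal_one, ← Complex.ofReal_sub, ← Complex.ofReal_log hx.le,
      ← Complex.ofReal_neg]
  rw [← h2, h1, ← Complex.ofReal_exp, ← Complex.ofReal_log (Real.exp_pos _).le, Real.log_exp]

/-- The double-sum term `μ(n)/(nm) · Q(nms)`. -/
noncomputable def G (s : ℝ) : ℕ+ × ℕ+ → ℝ := fun q ↦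
  ((moebius (q.1 : ℕ) : ℝ) / (((q.1 : ℕ) : ℝ) * ((q.2 : ℕ) : ℝ))) *
    Q ((((q.1 : ℕ) : ℝ) * ((q.2 : ℕ) : ℝ)) * s)

/-- Majorant for `G`. -/
noncomputable def M (s : ℝ) : ℕ+ × ℕ+ → ℝ := fun q ↦
  Q ((((q.1 : ℕ) : ℝ) * ((q.2 : ℕ) : ℝ)) * s) / (((q.1 : ℕ) : ℝ) * ((q.2 : ℕ) : ℝ))

lemma pnat_cast_pos (n : ℕ+) : (0:ℝ) < ((n : ℕ) : ℝ) := by exact_mod_cast n.pos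

lemma M_nonneg (s : ℝ) (q : ℕ+ × ℕ+) : 0 ≤ M s q :=
  div_nonneg (Q_nonneg _) (by positivity)

lemma M_row_eq (s : ℝ) (n m : ℕ+) :
    M s (n, m) = Q (((m : ℕ) : ℝ) * (((n : ℕ) : ℝ) * s)) / ((m : ℕ) : ℝ) * (1 / ((n : ℕ) : ℝ)) := by
  unfold M
  have h : ((m : ℕ) : ℝ) * (((n : ℕ) : ℝ) * s) = (((n : ℕ) : ℝ) * ((m : ℕ) : ℝ)) * s := by ring
  rw [h]
  ring

lemma summable_M {s : ℝ} (hs : 1 < s) : Summable (M s) := by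
  have rowsummable : ∀ n : ℕ+, Summable (fun m : ℕ+ ↦ M s (n, m)) := by
    intro n
    refine Summable.congr (((summable_Qm (one_lt_mul_t hs n))).mul_right (1 / ((n : ℕ) : ℝ)))
      fun m ↦ (M_row_eq s n m).symm
  have rowsum : ∀ n : ℕ+, ∑' m : ℕ+, M s (n, m) = S (((n : ℕ) : ℝ) * s) * (1 / ((n : ℕ) : ℝ)) := by
    intro n
    calc ∑' m : ℕ+, M s (n, m)
        = ∑' m : ℕ+, Q (((m : ℕ) : ℝ) * (((n : ℕ) : ℝ) * s)) / ((m : ℕ) : ℝ)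
            * (1 / ((n : ℕ) : ℝ)) := tsum_congr fun m ↦ M_row_eq s n m
      _ = (∑' m : ℕ+, Q (((m : ℕ) : ℝ) * (((n : ℕ) : ℝ) * s)) / ((m : ℕ) : ℝ))
            * (1 / ((n : ℕ) : ℝ)) := tsum_mul_right
      _ = S (((n : ℕ) : ℝ) * s) * (1 / ((n : ℕ) : ℝ)) := by
            rw [← S_eq (one_lt_mul_t hs n)]
  set r : ℝ := (2:ℝ) ^ (-s) with hr
  have hr0 : 0 ≤ r := (Real.rpow_pos_of_pos two_pos _).le
  have hr1 : r < 1 := Real.rpow_lt_one_of_one_lt_of_neg one_lt_two (by linarith)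
  set C : ℝ := 2 * ((2:ℝ) ^ s * Q s) with hC
  have geom : Summable (fun n : ℕ+ ↦ C * r ^ (n : ℕ)) :=
    (((summable_geometric_of_lt_one hr0 hr1).mul_left C)).comp_injective PNat.coe_injective
  have bound : ∀ n : ℕ+, S (((n : ℕ) : ℝ) * s) * (1 / ((n : ℕ) : ℝ)) ≤ C * r ^ (n : ℕ) := by
    intro n
    have hns : 1 < ((n : ℕ) : ℝ) * s := one_lt_mul_t hs n
    have h1 : S (((n : ℕ) : ℝ) * s) * (1 / ((n : ℕ) : ℝ)) ≤ S (((n : ℕ) : ℝ) * s) := by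
      have hn1 : 1 / ((n : ℕ) : ℝ) ≤ 1 := by
        rw [div_le_one (pnat_cast_pos n)]
        exact_mod_cast n.one_le
      exact mul_le_of_le_one_right (S_nonneg hns) hn1
    have h2 : S (((n : ℕ) : ℝ) * s) ≤ 2 * Q (((n : ℕ) : ℝ) * s) := S_le hns
    have h3 : Q (((n : ℕ) : ℝ) * s) ≤ (2:ℝ) ^ (s - ((n : ℕ) : ℝ) * s) * Q s := by
      refine Q_le hs ?_
      nlinarith [pnat_cast_pos n, (by exact_mod_cast n.one_le : (1:ℝ) ≤ ((n : ℕ) : ℝ))]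
    have h4 : (2:ℝ) ^ (s - ((n : ℕ) : ℝ) * s) = (2:ℝ) ^ s * r ^ (n : ℕ) := by
      rw [hr, ← Real.rpow_natCast ((2:ℝ) ^ (-s)) (n : ℕ), ← Real.rpow_mul (by norm_num),
        ← Real.rpow_add two_pos]
      ring_nf
    have : S (((n : ℕ) : ℝ) * s) * (1 / ((n : ℕ) : ℝ)) ≤ 2 * ((2:ℝ) ^ s * r ^ (n : ℕ) * Q s) := by
      calc S (((n : ℕ) : ℝ) * s) * (1 / ((n : ℕ) : ℝ)) ≤ S (((n : ℕ) : ℝ) * s) := h1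
        _ ≤ 2 * Q (((n : ℕ) : ℝ) * s) := h2
        _ ≤ 2 * ((2:ℝ) ^ (s - ((n : ℕ) : ℝ) * s) * Q s) := by linarith [h3]
        _ = 2 * ((2:ℝ) ^ s * r ^ (n : ℕ) * Q s) := by rw [h4]
    calc S (((n : ℕ) : ℝ) * s) * (1 / ((n : ℕ) : ℝ))
        ≤ 2 * ((2:ℝ) ^ s * r ^ (n : ℕ) * Q s) := this
      _ = C * r ^ (n : ℕ) := by rw [hC]; ring
  rw [summable_prod_of_nonneg (fun q ↦ M_nonneg s q)]
  refine ⟨rowsummable, ?_⟩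
  refine Summable.of_nonneg_of_le (fun n ↦ ?_) (fun n ↦ ?_) geom
  · exact tsum_nonneg fun m ↦ M_nonneg s (n, m)
  · rw [rowsum n]; exact bound n

lemma abs_moebius_real_le_one (k : ℕ) : |((moebius k : ℤ) : ℝ)| ≤ 1 := by
  have h : |moebius k| ≤ 1 := by
    rw [ArithmeticFunction.abs_moebius]
    split <;> norm_num
  have h2 : ((|moebius k| : ℤ) : ℝ) ≤ 1 := by exact_mod_cast h
  rwa [Int.cast_abs] at h2

lemma summable_G {s : ℝ} (hs : 1 < s) : Summable (G s) := by
  refine Summable.of_norm_bounded (summable_M hs) fun q ↦ ?_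
  have hnm : (0:ℝ) < ((q.1 : ℕ) : ℝ) * ((q.2 : ℕ) : ℝ) :=
    mul_pos (pnat_cast_pos q.1) (pnat_cast_pos q.2)
  unfold G M
  rw [Real.norm_eq_abs, abs_mul, abs_div, abs_of_pos hnm, abs_of_nonneg (Q_nonneg _)]
  calc |((moebius (q.1 : ℕ) : ℤ) : ℝ)| / (((q.1 : ℕ) : ℝ) * ((q.2 : ℕ) : ℝ))
        * Q ((((q.1 : ℕ) : ℝ) * ((q.2 : ℕ) : ℝ)) * s)
      ≤ 1 / (((q.1 : ℕ) : ℝ) * ((q.2 : ℕ) : ℝ))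
        * Q ((((q.1 : ℕ) : ℝ) * ((q.2 : ℕ) : ℝ)) * s) := by
        have hQ := Q_nonneg ((((q.1 : ℕ) : ℝ) * ((q.2 : ℕ) : ℝ)) * s)
        have habs := abs_moebius_real_le_one (q.1 : ℕ)
        gcongr
    _ = Q ((((q.1 : ℕ) : ℝ) * ((q.2 : ℕ) : ℝ)) * s)
        / (((q.1 : ℕ) : ℝ) * ((q.2 : ℕ) : ℝ)) := by rw [one_div_mul_eq_div]

lemma fiber_sum (s : ℝ) (N : ℕ+) :
    ∑' (q : (fun q : ℕ+ × ℕ+ ↦ q.1 * q.2) ⁻¹' {N}), G s q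
      = if N = 1 then Q s else 0 := by
  have hN0 : (N : ℕ) ≠ 0 := N.pos.ne'
  set g : ℕ × ℕ → ℝ := fun q ↦ (moebius q.1 : ℝ) * (Q (((N : ℕ) : ℝ) * s) / ((N : ℕ) : ℝ))
    with hgdef
  let e : (((N : ℕ).divisorsAntidiagonal : Finset (ℕ × ℕ)) : Set (ℕ × ℕ))
      ≃ ((fun q : ℕ+ × ℕ+ ↦ q.1 * q.2) ⁻¹' {N}) :=
    ⟨fun x ↦ ⟨(⟨x.1.1, by
        have h := (Nat.mem_divisorsAntidiagonal.mp x.2).1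
        exact Nat.pos_of_ne_zero fun h0 ↦ hN0 (by rw [← h, h0, zero_mul])⟩,
      ⟨x.1.2, by
        have h := (Nat.mem_divisorsAntidiagonal.mp x.2).1
        exact Nat.pos_of_ne_zero fun h0 ↦ hN0 (by rw [← h, h0, mul_zero])⟩), by
        have h := (Nat.mem_divisorsAntidiagonal.mp x.2).1
        simp only [Set.mem_preimage, Set.mem_singleton_iff]
        exact PNat.coe_injective h⟩,
    fun y ↦ ⟨((y.1.1 : ℕ), (y.1.2 : ℕ)), by
        have h := y.2
        simp only [Set.mem_preimage, Set.mem_singleton_iff] at h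
        simp only [Finset.coe_sort_coe, Finset.mem_coe, Nat.mem_divisorsAntidiagonal]
        refine ⟨?_, hN0⟩
        rw [← PNat.mul_coe, h]⟩,
    fun x ↦ by ext <;> rfl,
    fun y ↦ by ext <;> rfl⟩
  have step1 : ∑' (q : (fun q : ℕ+ × ℕ+ ↦ q.1 * q.2) ⁻¹' {N}), G s q
      = ∑' (x : (((N : ℕ).divisorsAntidiagonal : Finset (ℕ × ℕ)) : Set (ℕ × ℕ))), g x := by
    rw [← e.tsum_eq]
    refine tsum_congr fun x ↦ ?_
    have h := (Nat.mem_divisorsAntidiagonal.mp x.2).1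
    show G s _ = g x.val
    unfold G
    rw [hgdef]
    simp only
    have hx : ((x.val.1 : ℕ) : ℝ) * ((x.val.2 : ℕ) : ℝ) = ((N : ℕ) : ℝ) := by
      exact_mod_cast congrArg (fun k : ℕ ↦ (k : ℝ)) h
    have c1 : (((e x : { q : ℕ+ × ℕ+ // q ∈ (fun q : ℕ+ × ℕ+ ↦ q.1 * q.2) ⁻¹' {N} }) :
        ℕ+ × ℕ+).1 : ℕ) = x.val.1 := rfl
    have c2 : (((e x : { q : ℕ+ × ℕ+ // q ∈ (fun q : ℕ+ × ℕ+ ↦ q.1 * q.2) ⁻¹' {N} }) :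
        ℕ+ × ℕ+).2 : ℕ) = x.val.2 := rfl
    rw [c1, c2, hx]
    ring
  rw [step1, Finset.tsum_subtype' ((N : ℕ).divisorsAntidiagonal) g, hgdef]
  rw [← Finset.sum_mul]
  have hmoeb : (∑ x ∈ (N : ℕ).divisorsAntidiagonal, ((moebius x.1 : ℤ) : ℝ))
      = ((if (N : ℕ) = 1 then 1 else 0 : ℤ) : ℝ) := by
    rw [Nat.sum_divisorsAntidiagonal (f := fun a _ ↦ ((moebius a : ℤ) : ℝ))]
    have h : (∑ d ∈ (N : ℕ).divisors, moebius d) = if (N : ℕ) = 1 then 1 else 0 := by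
      have h1 := ArithmeticFunction.coe_mul_zeta_apply (f := moebius) (x := (N : ℕ))
      rw [ArithmeticFunction.moebius_mul_coe_zeta] at h1
      rw [← h1, ArithmeticFunction.one_apply]
    calc ∑ i ∈ (N : ℕ).divisors, ((moebius i : ℤ) : ℝ)
        = ((∑ i ∈ (N : ℕ).divisors, moebius i : ℤ) : ℝ) := by push_cast; rfl
      _ = _ := by rw [h]
  rw [hmoeb]
  by_cases hN1 : N = 1
  · subst hN1
    simp
  · have : (N : ℕ) ≠ 1 := fun h ↦ hN1 (PNat.coe_injective (by simpa using h))
    simp [hN1, this]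

lemma key_real {s : ℝ} (hs : 1 < s) :
    ∑' n : ℕ+, ((moebius (n : ℕ) : ℝ) / ((n : ℕ) : ℝ)) * S (((n : ℕ) : ℝ) * s) = Q s := by
  have hG := summable_G hs
  have h1 : ∀ n : ℕ+, ((moebius (n : ℕ) : ℝ) / ((n : ℕ) : ℝ)) * S (((n : ℕ) : ℝ) * s)
      = ∑' m : ℕ+, G s (n, m) := by
    intro n
    rw [S_eq (one_lt_mul_t hs n), ← tsum_mul_left]
    refine tsum_congr fun m ↦ ?_
    unfold G
    simp only
    have h : ((m : ℕ) : ℝ) * (((n : ℕ) : ℝ) * s) = (((n : ℕ) : ℝ) * ((m : ℕ) : ℝ)) * s := by ring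
    rw [h]
    rw [div_mul_div_comm, div_mul_eq_mul_div]
  rw [tsum_congr h1, ← Summable.tsum_prod' hG (fun n ↦ hG.prod_factor n),
    ← (hG.hasSum.tsum_fiberwise (fun q : ℕ+ × ℕ+ ↦ q.1 * q.2)).tsum_eq,
    tsum_congr (fiber_sum s)]
  exact tsum_ite_eq (1 : ℕ+) (fun _ ↦ Q s)

end PZAux

theorem primeZeta_eq_moebius_sum (s : ℝ) (hs : 1 < s) :
    (primeZeta s : ℂ) =
      ∑' n : ℕ+, ((ArithmeticFunction.moebius n : ℂ) / (n : ℂ)) *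
        Complex.log (riemannZeta ((n : ℂ) * (s : ℂ))) := by
  rw [PZAux.primeZeta_eq_Q s, ← PZAux.key_real hs, Complex.ofReal_tsum]
  refine tsum_congr fun n ↦ ?_
  have hn : ((n : ℂ) * (s : ℂ)) = ((((n : ℕ) : ℝ) * s : ℝ) : ℂ) := by push_cast; ring
  rw [hn, PZAux.clog_zeta (PZAux.one_lt_mul_t hs n)]
  push_cast
  ring
end

section
/- For real z > 0, the exponential integral satisfies E₁(z) = -γ - log z - ∑_{k=1}^∞ (-z)^k/(k·k!), where γ is the Euler–Mascheroni constant. -/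
/-- The exponential integral `E₁(z) = ∫_z^∞ e^{-t}/t dt` for real `z`. -/
noncomputable def expIntE1 (z : ℝ) : ℝ := ∫ t in Set.Ioi z, Real.exp (-t) / t

namespace ExpIntE1Aux
open MeasureTheory Set Filter Real Topology


-- lemma (a)
lemma integral_exp_mul_log :
    ∫ t in Ioi (0:ℝ), Real.exp (-t) * Real.log t = -Real.eulerMascheroniConstant := by
  have h1 := Complex.hasDerivAt_GammaIntegral (s := 1) (by norm_num)
  have h2 : Complex.GammaIntegral =ᶠ[nhds (1:ℂ)] Complex.Gamma := by
    have hopen : IsOpen {s : ℂ | 0 < s.re} := isOpen_lt continuous_const Complex.continuous_re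
    filter_upwards [hopen.mem_nhds (by norm_num)] with s hs
    exact (Complex.Gamma_eq_integral hs).symm
  have h3 : HasDerivAt Complex.Gamma
      (∫ t : ℝ in Ioi 0, (t:ℂ) ^ ((1:ℂ) - 1) * (Real.log t * Real.exp (-t))) 1 :=
    h1.congr_of_eventuallyEq h2.symm
  have h4 := h3.unique Complex.hasDerivAt_Gamma_one
  simp only [sub_self, Complex.cpow_zero, one_mul, ← Complex.ofReal_mul] at h4
  have h4' : (↑(∫ t in Ioi (0:ℝ), Real.log t * Real.exp (-t)) : ℂ) = ↑(-Real.eulerMascheroniConstant : ℝ) := by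
    have h6 : (∫ t in Ioi (0:ℝ), ((Real.log t * Real.exp (-t) : ℝ) : ℂ))
        = ((∫ t in Ioi (0:ℝ), Real.log t * Real.exp (-t) : ℝ) : ℂ) := integral_ofReal
    rw [← h6, Complex.ofReal_neg]
    exact h4
  have h5 : ∫ t in Ioi (0:ℝ), Real.log t * Real.exp (-t) = -Real.eulerMascheroniConstant :=
    Complex.ofReal_injective h4'
  rw [← h5]
  simp_rw [mul_comm]


lemma integrableOn_exp_div {z : ℝ} (hz : 0 < z) :
    IntegrableOn (fun t => Real.exp (-t) / t) (Ioi z) := by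
  have hexp : IntegrableOn (fun t : ℝ => Real.exp (-t)) (Ioi z) := by
    simpa using exp_neg_integrableOn_Ioi z one_pos
  refine Integrable.mono' (hexp.div_const z) ?_ ?_
  · exact ((Real.continuous_exp.comp continuous_neg).measurable.div
      measurable_id).aestronglyMeasurable
  · filter_upwards [ae_restrict_mem measurableSet_Ioi] with t ht
    rw [Real.norm_of_nonneg (div_nonneg (Real.exp_pos _).le (hz.trans ht).le)]
    exact div_le_div_of_nonneg_left (Real.exp_pos _).le hz (le_of_lt ht)

lemma integrableOn_exp_mul_log :
    IntegrableOn (fun t => Real.exp (-t) * Real.log t) (Ioi (0:ℝ)) := by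
  have hmeas : AEStronglyMeasurable (fun t => Real.exp (-t) * Real.log t)
      (volume.restrict (Ioi (0:ℝ))) :=
    ((Real.continuous_exp.comp continuous_neg).measurable.mul
      Real.measurable_log).aestronglyMeasurable
  rw [← Ioc_union_Ioi_eq_Ioi (zero_le_one (α := ℝ)), integrableOn_union]
  constructor
  · -- on Ioc 0 1, dominated by 2 * t ^ (-1/2)
    have hg : IntegrableOn (fun t : ℝ => 2 * t ^ (-(1/2) : ℝ)) (Ioc 0 1) := by
      have := (intervalIntegral.intervalIntegrable_rpow' (a := 0) (b := 1) (r := -(1/2)) (by norm_num))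
      rw [intervalIntegrable_iff_integrableOn_Ioc_of_le zero_le_one] at this
      exact this.const_mul 2
    refine Integrable.mono' hg (hmeas.mono_measure (Measure.restrict_mono Ioc_subset_Ioi_self le_rfl)) ?_
    filter_upwards [ae_restrict_mem measurableSet_Ioc] with t ht
    have ht0 : 0 < t := ht.1
    have h1 : Real.log (t ^ (-(1/2) : ℝ)) ≤ t ^ (-(1/2) : ℝ) - 1 :=
      Real.log_le_sub_one_of_pos (Real.rpow_pos_of_pos ht0 _)
    rw [Real.log_rpow ht0] at h1
    have hlogle : -Real.log t ≤ 2 * t ^ (-(1/2) : ℝ) := by nlinarith [Real.rpow_pos_of_pos ht0 (-(1/2) : ℝ)]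
    have hlog0 : Real.log t ≤ 0 := Real.log_nonpos ht0.le ht.2
    rw [norm_mul, Real.norm_of_nonneg (Real.exp_pos _).le, Real.norm_of_nonpos hlog0]
    calc Real.exp (-t) * (-Real.log t) ≤ 1 * (-Real.log t) := by
          apply mul_le_mul_of_nonneg_right _ (by linarith)
          exact Real.exp_le_one_iff.mpr (by linarith)
      _ ≤ 2 * t ^ (-(1/2) : ℝ) := by linarith
  · -- on Ioi 1, dominated by exp (-t) * t
    have hg : IntegrableOn (fun t : ℝ => Real.exp (-t) * t) (Ioi 1) := by
      have := Real.GammaIntegral_convergent (s := 2) (by norm_num)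
      have h2 : IntegrableOn (fun t : ℝ => Real.exp (-t) * t ^ ((2:ℝ) - 1)) (Ioi 1) :=
        this.mono (Ioi_subset_Ioi zero_le_one) le_rfl
      refine h2.congr_fun (fun t ht => ?_) measurableSet_Ioi
      norm_num [Real.rpow_one]
    refine Integrable.mono' hg (hmeas.mono_measure (Measure.restrict_mono (Ioi_subset_Ioi zero_le_one) le_rfl)) ?_
    filter_upwards [ae_restrict_mem measurableSet_Ioi] with t ht
    have ht1 : (1:ℝ) < t := ht
    have hlog : Real.log t ≤ t := (Real.log_le_sub_one_of_pos (by linarith)).trans (by linarith)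
    have hlog0 : 0 ≤ Real.log t := Real.log_nonneg ht1.le
    rw [norm_mul, Real.norm_of_nonneg (Real.exp_pos _).le, Real.norm_of_nonneg hlog0]
    exact mul_le_mul_of_nonneg_left hlog (Real.exp_pos _).le

lemma integrableOn_exp_mul_log_Ioi {z : ℝ} (hz : 0 < z) :
    IntegrableOn (fun t => Real.exp (-t) * Real.log t) (Ioi z) :=
  integrableOn_exp_mul_log.mono (Ioi_subset_Ioi hz.le) le_rfl

lemma ibp {z : ℝ} (hz : 0 < z) :
    ∫ t in Ioi z, Real.exp (-t) / t =
      -(Real.exp (-z) * Real.log z) + ∫ t in Ioi z, Real.exp (-t) * Real.log t := by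
  have hdiv := integrableOn_exp_div hz
  have hlog := integrableOn_exp_mul_log_Ioi hz
  have key : ∫ t in Ioi z, (Real.exp (-t) / t - Real.exp (-t) * Real.log t)
      = 0 - Real.exp (-z) * Real.log z := by
    refine integral_Ioi_of_hasDerivAt_of_tendsto
      (f := fun t => Real.exp (-t) * Real.log t) ?_ ?_ ?_ ?_
    · exact (((Real.continuous_exp.comp continuous_neg).continuousAt).mul
        (Real.continuousAt_log hz.ne')).continuousWithinAt
    · intro x hx
      have hx0 : 0 < x := hz.trans hx
      have h1 : HasDerivAt (fun t : ℝ => Real.exp (-t)) (-Real.exp (-x)) x := by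
        simpa using (hasDerivAt_neg x).exp
      have := h1.mul (Real.hasDerivAt_log hx0.ne')
      convert this using 1
      · rfl
      · rfl
      ring
    · exact hdiv.sub hlog
    · have htend : Tendsto (fun t : ℝ => t ^ 1 * Real.exp (-t)) atTop (𝓝 0) :=
        Real.tendsto_pow_mul_exp_neg_atTop_nhds_zero 1
      refine squeeze_zero_norm' ?_ htend
      filter_upwards [eventually_ge_atTop (1:ℝ)] with t ht
      have hlog0 : 0 ≤ Real.log t := Real.log_nonneg ht
      have hlogle : Real.log t ≤ t := (Real.log_le_sub_one_of_pos (by linarith)).trans (by linarith)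
      rw [norm_mul, Real.norm_of_nonneg (Real.exp_pos _).le, Real.norm_of_nonneg hlog0]
      calc Real.exp (-t) * Real.log t ≤ Real.exp (-t) * t :=
            mul_le_mul_of_nonneg_left hlogle (Real.exp_pos _).le
        _ = t ^ 1 * Real.exp (-t) := by ring
  rw [integral_sub hdiv hlog] at key
  linarith

lemma one_sub_exp_le {t : ℝ} (ht : 0 ≤ t) : 1 - Real.exp (-t) ≤ t := by
  nlinarith [Real.add_one_le_exp (-t)]

lemma one_sub_exp_nonneg {t : ℝ} (ht : 0 ≤ t) : 0 ≤ 1 - Real.exp (-t) := by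
  nlinarith [Real.exp_le_one_iff.mpr (neg_nonpos.mpr ht)]

lemma intervalIntegrable_one_sub_exp_div {z : ℝ} (hz : 0 < z) :
    IntervalIntegrable (fun t => (1 - Real.exp (-t)) / t) volume 0 z := by
  rw [intervalIntegrable_iff_integrableOn_Ioc_of_le hz.le]
  refine Integrable.mono' (g := fun _ : ℝ => (1:ℝ)) (integrableOn_const measure_Ioc_lt_top.ne) ?_ ?_
  · exact ((measurable_const.sub (Real.measurable_exp.comp measurable_neg)).div
      measurable_id).aestronglyMeasurable
  · filter_upwards [ae_restrict_mem measurableSet_Ioc] with t ht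
    have ht0 : 0 < t := ht.1
    rw [Real.norm_of_nonneg (div_nonneg (one_sub_exp_nonneg ht0.le) ht0.le)]
    rw [div_le_one ht0]
    exact one_sub_exp_le ht0.le

lemma intervalIntegrable_exp_mul_log {z : ℝ} (hz : 0 < z) :
    IntervalIntegrable (fun t => Real.exp (-t) * Real.log t) volume 0 z := by
  rw [intervalIntegrable_iff_integrableOn_Ioc_of_le hz.le]
  exact integrableOn_exp_mul_log.mono Ioc_subset_Ioi_self le_rfl

lemma ftc0 {z : ℝ} (hz : 0 < z) :
    ∫ t in (0:ℝ)..z, (Real.exp (-t) * Real.log t + (1 - Real.exp (-t)) / t)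
      = (1 - Real.exp (-z)) * Real.log z := by
  have h := intervalIntegral.integral_eq_sub_of_hasDeriv_right_of_le hz.le
    (f := fun t => (1 - Real.exp (-t)) * Real.log t)
    (f' := fun t => Real.exp (-t) * Real.log t + (1 - Real.exp (-t)) / t)
    ?_ ?_ ?_
  · rw [h]; simp
  · -- continuity on Icc
    intro x hx
    rcases eq_or_lt_of_le hx.1 with h0 | h0
    · -- x = 0
      subst h0
      have htend : Tendsto (fun t => (1 - Real.exp (-t)) * Real.log t) (𝓝[>] (0:ℝ)) (𝓝 0) := by
        have hg : Tendsto (fun t : ℝ => |Real.log t * t ^ (1:ℝ)|) (𝓝[>] (0:ℝ)) (𝓝 0) := by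
          have := (tendsto_log_mul_rpow_nhdsGT_zero one_pos).abs
          simpa using this
        refine squeeze_zero_norm' ?_ hg
        filter_upwards [self_mem_nhdsWithin] with t (ht : t ∈ Ioi (0:ℝ))
        have ht0 : (0:ℝ) < t := ht
        rw [Real.rpow_one, norm_mul, abs_mul]
        rw [Real.norm_of_nonneg (one_sub_exp_nonneg ht0.le)]
        calc (1 - Real.exp (-t)) * ‖Real.log t‖ ≤ t * ‖Real.log t‖ :=
              mul_le_mul_of_nonneg_right (one_sub_exp_le ht0.le) (norm_nonneg _)
          _ = |Real.log t| * |t| := by rw [abs_of_pos ht0, Real.norm_eq_abs]; ring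
      have : ContinuousWithinAt (fun t => (1 - Real.exp (-t)) * Real.log t) (Ioi (0:ℝ)) 0 := by
        rw [ContinuousWithinAt]
        simpa using htend
      have h2 : ContinuousWithinAt (fun t => (1 - Real.exp (-t)) * Real.log t) (Ici (0:ℝ)) 0 :=
        continuousWithinAt_Ioi_iff_Ici.mp this
      exact h2.mono (fun y hy => hy.1)
    · -- x > 0
      exact (((continuous_const.sub (Real.continuous_exp.comp continuous_neg)).continuousAt.mul
        (Real.continuousAt_log h0.ne')).continuousWithinAt)
  · -- derivative on Ioo
    intro x hx
    have hx0 : 0 < x := hx.1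
    have h1 : HasDerivAt (fun t : ℝ => Real.exp (-t)) (-Real.exp (-x)) x := by
      simpa using (hasDerivAt_neg x).exp
    have h2 := ((hasDerivAt_const x (1:ℝ)).sub h1).mul (Real.hasDerivAt_log hx0.ne')
    refine (h2.congr_deriv ?_).hasDerivWithinAt
    field_simp
    simp only [Pi.sub_apply, zero_sub, neg_neg]
  · exact (intervalIntegrable_exp_mul_log hz).add (intervalIntegrable_one_sub_exp_div hz)

lemma pointwise_series {t : ℝ} (ht : 0 < t) :
    (1 - Real.exp (-t)) / t = ∑' n : ℕ, (-1) ^ n * t ^ n / (Nat.factorial (n + 1)) := by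
  have hsum : Summable (fun n : ℕ => (-t) ^ n / (Nat.factorial n : ℝ)) :=
    Real.summable_pow_div_factorial (-t)
  have hexp : Real.exp (-t) = 1 + ∑' n : ℕ, (-t) ^ (n + 1) / (Nat.factorial (n + 1) : ℝ) := by
    rw [Real.exp_eq_exp_ℝ, NormedSpace.exp_eq_tsum_div]
    show ∑' n : ℕ, (-t) ^ n / (Nat.factorial n : ℝ) = _
    rw [hsum.tsum_eq_zero_add]
    norm_num
  have h2 : ∑' n : ℕ, (-1) ^ n * t ^ (n + 1) / (Nat.factorial (n + 1) : ℝ)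
      = -∑' n : ℕ, (-t) ^ (n + 1) / (Nat.factorial (n + 1) : ℝ) := by
    rw [← tsum_neg]
    refine tsum_congr fun n => ?_
    rw [show (-t) ^ (n + 1) = (-1) ^ (n + 1) * t ^ (n + 1) from by rw [neg_pow], pow_succ]
    ring
  have h1 : 1 - Real.exp (-t) = ∑' n : ℕ, (-1) ^ n * t ^ (n + 1) / (Nat.factorial (n + 1) : ℝ) := by
    rw [h2, hexp]; ring
  rw [h1, ← tsum_div_const]
  refine tsum_congr fun n => ?_
  rw [pow_succ]
  field_simp

lemma integral_term {z : ℝ} (hz : 0 < z) (n : ℕ) :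
    ∫ t in Ioc (0:ℝ) z, (-1) ^ n * t ^ n / (Nat.factorial (n + 1) : ℝ)
      = (-1) ^ n * z ^ (n + 1) / ((n + 1) * (Nat.factorial (n + 1)) : ℝ) := by
  rw [← intervalIntegral.integral_of_le hz.le]
  have : ∀ t : ℝ, (-1:ℝ) ^ n * t ^ n / (Nat.factorial (n + 1) : ℝ)
      = ((-1:ℝ) ^ n / (Nat.factorial (n + 1) : ℝ)) * t ^ n := fun t => by ring
  simp_rw [this]
  rw [intervalIntegral.integral_const_mul, integral_pow]
  have hfac : (0:ℝ) < (Nat.factorial (n + 1) : ℝ) := by positivity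
  field_simp
  ring

lemma series_integral {z : ℝ} (hz : 0 < z) :
    ∫ t in (0:ℝ)..z, (1 - Real.exp (-t)) / t
      = -∑' k : ℕ+, (-z) ^ (k : ℕ) / ((k : ℝ) * (Nat.factorial k)) := by
  rw [intervalIntegral.integral_of_le hz.le]
  have hswap : ∫ t in Ioc (0:ℝ) z, (1 - Real.exp (-t)) / t
      = ∑' n : ℕ, ∫ t in Ioc (0:ℝ) z, (-1) ^ n * t ^ n / (Nat.factorial (n + 1) : ℝ) := by
    rw [show (∫ t in Ioc (0:ℝ) z, (1 - Real.exp (-t)) / t)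
        = ∫ t in Ioc (0:ℝ) z, ∑' n : ℕ, (-1) ^ n * t ^ n / (Nat.factorial (n + 1) : ℝ) from ?_]
    · rw [← MeasureTheory.integral_tsum_of_summable_integral_norm ?_ ?_]
      · -- integrability of each term
        intro n
        apply Continuous.integrableOn_Ioc
        continuity
      · -- summability of integrals of norms
        apply Summable.of_nonneg_of_le
          (fun n => integral_nonneg fun t => norm_nonneg _)
          (fun n => ?_)
          ((Real.summable_pow_div_factorial z).mul_right z)
        have hbound : ∀ t ∈ Ioc (0:ℝ) z, ‖(-1:ℝ) ^ n * t ^ n / (Nat.factorial (n + 1) : ℝ)‖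
            ≤ z ^ n / (Nat.factorial n : ℝ) := by
          intro t ht
          rw [norm_div, norm_mul, norm_pow, norm_pow, norm_neg, norm_one, one_pow, one_mul]
          rw [Real.norm_of_nonneg (Nat.cast_nonneg _), Real.norm_of_nonneg ht.1.le]
          apply div_le_div₀ (by positivity) (pow_le_pow_left₀ ht.1.le ht.2 n)
            (by positivity)
          exact_mod_cast Nat.factorial_le (Nat.le_succ n)
        calc ∫ t in Ioc (0:ℝ) z, ‖(-1:ℝ) ^ n * t ^ n / (Nat.factorial (n + 1) : ℝ)‖
            ≤ ∫ _ in Ioc (0:ℝ) z, z ^ n / (Nat.factorial n : ℝ) := by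
              apply setIntegral_mono_on _ (integrableOn_const measure_Ioc_lt_top.ne)
                measurableSet_Ioc hbound
              · exact (Continuous.integrableOn_Ioc (by continuity)).norm
          _ = z ^ n / (Nat.factorial n : ℝ) * z := by
              rw [setIntegral_const]
              rw [Real.volume_real_Ioc]
              rw [smul_eq_mul, max_eq_left (by linarith)]
              ring
    · apply setIntegral_congr_fun measurableSet_Ioc
      intro t ht
      exact pointwise_series ht.1
  rw [hswap]
  have hterm : ∀ n : ℕ, ∫ t in Ioc (0:ℝ) z, (-1) ^ n * t ^ n / (Nat.factorial (n + 1) : ℝ)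
      = (-1) ^ n * z ^ (n + 1) / ((n + 1) * (Nat.factorial (n + 1)) : ℝ) := integral_term hz
  simp_rw [hterm]
  rw [← Equiv.pnatEquivNat.symm.tsum_eq (f := fun k : ℕ+ => (-z) ^ (k : ℕ) / ((k : ℝ) * (Nat.factorial k)))]
  rw [← tsum_neg]
  refine tsum_congr fun n => ?_
  have hc : ((Equiv.pnatEquivNat.symm n : ℕ+) : ℕ) = n + 1 := by
    simp [Equiv.pnatEquivNat, Nat.succPNat]
  rw [hc]
  rw [show (-z) ^ (n + 1) = (-1) ^ (n + 1) * z ^ (n + 1) from by rw [neg_pow], pow_succ]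
  push_cast
  ring

end ExpIntE1Aux

open MeasureTheory Set Filter Real Topology ExpIntE1Aux in
theorem expIntE1_eq_series (z : ℝ) (hz : 0 < z) :
    expIntE1 z = -Real.eulerMascheroniConstant - Real.log z -
      ∑' k : ℕ+, (-z) ^ (k : ℕ) / ((k : ℝ) * (Nat.factorial k)) := by
  have hsplit : ∫ t in Ioi (0:ℝ), Real.exp (-t) * Real.log t
      = (∫ t in Ioc (0:ℝ) z, Real.exp (-t) * Real.log t)
        + ∫ t in Ioi z, Real.exp (-t) * Real.log t := by
    rw [← setIntegral_union (Ioc_disjoint_Ioi le_rfl) measurableSet_Ioi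
      (integrableOn_exp_mul_log.mono Ioc_subset_Ioi_self le_rfl)
      (integrableOn_exp_mul_log_Ioi hz)]
    rw [Ioc_union_Ioi_eq_Ioi hz.le]
  have hIoc : ∫ t in Ioc (0:ℝ) z, Real.exp (-t) * Real.log t
      = ∫ t in (0:ℝ)..z, Real.exp (-t) * Real.log t :=
    (intervalIntegral.integral_of_le hz.le).symm
  have hadd : ∫ t in (0:ℝ)..z, (Real.exp (-t) * Real.log t + (1 - Real.exp (-t)) / t)
      = (∫ t in (0:ℝ)..z, Real.exp (-t) * Real.log t)
        + ∫ t in (0:ℝ)..z, (1 - Real.exp (-t)) / t :=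
    intervalIntegral.integral_add (intervalIntegrable_exp_mul_log hz)
      (intervalIntegrable_one_sub_exp_div hz)
  have h1 := ftc0 hz
  have h2 := series_integral hz
  have h3 := ibp hz
  have h4 := integral_exp_mul_log
  rw [hsplit, hIoc] at h4
  rw [hadd, h2] at h1
  have hlog : Real.exp (-z) * Real.log z + (1 - Real.exp (-z)) * Real.log z = Real.log z := by
    ring
  show ∫ t in Set.Ioi z, Real.exp (-t) / t = _
  rw [h3]
  linarith
end

section
/- Assume the Riemann Hypothesis bound |π(x) - li(x)| ≤ C·√x·log x for x ≥ 2. Then for every real s with 1/2 < s, the limit lim_{x→∞} [ ∑_{p ≤ x} p^{-s} + E₁((s-1)·log x) ] exists (for s ≠ 1, interpreting E₁ at negative real argument via its real principal value -γ - log|z| - ∑_{k≥1}(-z)^k/(k·k!)). -/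
/-- The prime counting function `π(x)` for real `x`. -/
noncomputable def primePi (x : ℝ) : ℝ := Nat.primeCounting ⌊x⌋₊

/-- The principal-value logarithmic integral `li(x) = P.V. ∫_0^x dt / log t`. -/
noncomputable def li (x : ℝ) : ℝ :=
  Filter.limUnder (nhdsWithin 0 (Set.Ioi (0 : ℝ))) fun ε : ℝ =>
    (∫ t in (0 : ℝ)..(1 - ε), 1 / Real.log t) + ∫ t in (1 + ε)..x, 1 / Real.log t

/-- The exponential integral extended to all nonzero real arguments via the real
principal value `-γ - log |z| - ∑_{k≥1} (-z)^k / (k·k!)`. -/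
noncomputable def expIntE1Ext (z : ℝ) : ℝ :=
  -Real.eulerMascheroniConstant - Real.log |z| -
    ∑' k : ℕ+, (-z) ^ (k : ℕ) / ((k : ℝ) * (Nat.factorial k))

namespace PZA
open MeasureTheory intervalIntegral Finset Filter

noncomputable def G (s : ℝ) (x : ℝ) : ℝ :=
  (∑ p ∈ (Finset.Iic ⌊x⌋₊).filter Nat.Prime, 1 / (p : ℝ) ^ s) +
    expIntE1Ext ((s - 1) * Real.log x)
noncomputable def EE (t : ℝ) : ℝ := primePi t - li t


noncomputable def gN (z : ℝ) : ℝ :=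
  ∑' n : ℕ, (-z) ^ (n + 1) / (((n : ℝ) + 1) * (Nat.factorial (n + 1)))

noncomputable def D (z : ℝ) : ℝ := ∑' n : ℕ, -(-z) ^ n / (Nat.factorial (n + 1))

lemma expIntE1Ext_eq (z : ℝ) :
    expIntE1Ext z = -Real.eulerMascheroniConstant - Real.log z - gN z := by
  rw [expIntE1Ext, Real.log_abs, gN]
  congr 1
  rw [← Equiv.tsum_eq Equiv.pnatEquivNat.symm]
  apply tsum_congr
  intro n
  simp [Equiv.pnatEquivNat, Nat.succPNat]

lemma hasDerivAt_gN (z : ℝ) : HasDerivAt gN (D z) z := by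
  have hR : (0:ℝ) < |z| + 1 := by positivity
  have hmem : z ∈ Metric.ball (0:ℝ) (|z| + 1) := by
    simp [Real.dist_eq, abs_sub_comm]
  have h0 : (0:ℝ) ∈ Metric.ball (0:ℝ) (|z| + 1) := by simp [hR]
  refine hasDerivAt_tsum_of_isPreconnected
    (u := fun n => (|z| + 1) ^ n / (Nat.factorial n))
    (g := fun (n : ℕ) (y : ℝ) => (-y) ^ (n + 1) / (((n : ℝ) + 1) * (Nat.factorial (n + 1))))
    (g' := fun (n : ℕ) (y : ℝ) => -(-y) ^ n / (Nat.factorial (n + 1)))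
    (Real.summable_pow_div_factorial _) Metric.isOpen_ball
    (convex_ball (0:ℝ) (|z|+1)).isPreconnected
    ?_ ?_ h0 ?_ hmem
  · intro n y _
    have h1 : HasDerivAt (fun w : ℝ => (-w) ^ (n + 1))
        (((n:ℝ) + 1) * (-y) ^ n * (-1)) y := by
      have := (hasDerivAt_neg y).fun_pow (n + 1)
      simpa using this
    have := h1.div_const (((n : ℝ) + 1) * (Nat.factorial (n + 1)))
    refine this.congr_deriv ?_
    have hn : ((n:ℝ) + 1) ≠ 0 := by positivity
    have hf : ((Nat.factorial (n+1) : ℝ)) ≠ 0 := by positivity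
    field_simp
  · intro n y hy
    have hy' : |y| ≤ |z| + 1 := by
      simp [Metric.mem_ball, Real.dist_eq] at hy
      linarith [le_of_lt hy, abs_nonneg y]
    rw [norm_div, norm_neg, norm_pow, norm_neg]
    have h1 : ‖y‖ ^ n ≤ (|z| + 1) ^ n := by
      exact pow_le_pow_left₀ (norm_nonneg _) hy' n
    have h2 : (Nat.factorial n : ℝ) ≤ ‖(Nat.factorial (n+1) : ℝ)‖ := by
      rw [Real.norm_natCast]
      exact_mod_cast Nat.factorial_le (Nat.le_succ n)
    exact div_le_div₀ (by positivity) h1 (by positivity) h2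
  · apply summable_of_ne_finset_zero (s := ∅)
    intro n _
    simp


lemma summable_D (z : ℝ) : Summable (fun n : ℕ => -(-z) ^ n / (Nat.factorial (n + 1))) := by
  apply Summable.of_norm
  apply Summable.of_nonneg_of_le (fun n => norm_nonneg _)
    (fun n => ?_) (Real.summable_pow_div_factorial |z|)
  rw [norm_div, norm_neg, norm_pow, norm_neg, Real.norm_natCast]
  apply div_le_div₀ (by positivity) (by simp) (by positivity)
  exact_mod_cast Nat.factorial_le (Nat.le_succ n)

lemma D_eq (z : ℝ) (hz : z ≠ 0) : D z = (Real.exp (-z) - 1) / z := by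
  have hsum : Summable (fun n : ℕ => (-z) ^ n / (Nat.factorial n : ℝ)) := by
    have := Real.summable_pow_div_factorial |(-z)|
    apply Summable.of_norm
    refine this.of_nonneg_of_le (fun n => norm_nonneg _) (fun n => ?_)
    rw [norm_div, norm_pow, Real.norm_natCast]
    simp [abs_pow]
  have hexp : Real.exp (-z) = ∑' n : ℕ, (-z) ^ n / (Nat.factorial n : ℝ) := by
    rw [Real.exp_eq_exp_ℝ, NormedSpace.exp_eq_tsum_div]
  have key : z * D z = Real.exp (-z) - 1 := by
    rw [D, ← tsum_mul_left]
    have : ∀ n : ℕ, z * (-(-z) ^ n / (Nat.factorial (n + 1))) =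
        (-z) ^ (n+1) / (Nat.factorial (n+1)) := by
      intro n
      rw [pow_succ]
      ring
    rw [tsum_congr this]
    have h0 := Summable.tsum_eq_zero_add hsum
    simp only [pow_zero, Nat.factorial_zero] at h0
    rw [← hexp] at h0
    norm_num at h0
    linarith
  rw [eq_div_iff hz]; linarith [key, mul_comm z (D z)]

lemma hasDerivAt_expIntE1Ext {z : ℝ} (hz : z ≠ 0) :
    HasDerivAt expIntE1Ext (-Real.exp (-z) / z) z := by
  have h1 : HasDerivAt (fun w => -Real.eulerMascheroniConstant - Real.log w - gN w)
      (0 - z⁻¹ - D z) z :=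
    ((hasDerivAt_const z _).sub (Real.hasDerivAt_log hz)).sub (hasDerivAt_gN z)
  have : HasDerivAt expIntE1Ext (0 - z⁻¹ - D z) z := by
    refine h1.congr_of_eventuallyEq ?_
    filter_upwards with w using expIntE1Ext_eq w
  convert this using 1
  rw [D_eq z hz]
  field_simp
  ring
lemma hasDerivAt_F {s : ℝ} (hs' : s ≠ 1) {x : ℝ} (hx : 1 < x) :
    HasDerivAt (fun x : ℝ => expIntE1Ext ((s - 1) * Real.log x))
      (-(x ^ (-s)) / Real.log x) x := by
  have hx0 : (0:ℝ) < x := lt_trans one_pos hx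
  have hlog : 0 < Real.log x := Real.log_pos hx
  have hz : (s - 1) * Real.log x ≠ 0 :=
    mul_ne_zero (sub_ne_zero.mpr hs') (ne_of_gt hlog)
  have hu : HasDerivAt (fun x : ℝ => (s - 1) * Real.log x) ((s - 1) * x⁻¹) x :=
    (Real.hasDerivAt_log (ne_of_gt hx0)).const_mul (s - 1)
  have := (hasDerivAt_expIntE1Ext hz).comp x hu
  refine this.congr_deriv ?_
  have hexp : Real.exp (-((s - 1) * Real.log x)) = x ^ (1 - s) := by
    rw [Real.rpow_def_of_pos hx0]
    ring_nf
  rw [hexp]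
  have hxs : x ^ (1 - s) = x ^ (-s) * x := by
    rw [← Real.rpow_add_one (ne_of_gt hx0) (-s)]
    ring_nf
  rw [hxs]
  field_simp
noncomputable def hh (t : ℝ) : ℝ := 1 / Real.log t - 1 / (t - 1)

lemma hh_quot {t : ℝ} (h1 : Real.log t ≠ 0) (h2 : t - 1 ≠ 0) :
    hh t = (t - 1 - Real.log t) / (Real.log t * (t - 1)) := by
  rw [hh]; field_simp

lemma num_bounds {t : ℝ} (ht : 0 < t) :
    0 ≤ t - 1 - Real.log t ∧ t - 1 - Real.log t ≤ (t - 1) ^ 2 / t := by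
  have h1 : Real.log t ≤ t - 1 := Real.log_le_sub_one_of_pos ht
  have h2 : Real.log t⁻¹ ≤ t⁻¹ - 1 := Real.log_le_sub_one_of_pos (by positivity)
  rw [Real.log_inv] at h2
  constructor
  · linarith
  · have : 1 - t⁻¹ ≤ Real.log t := by linarith
    rw [le_div_iff₀ ht]
    nlinarith [mul_le_mul_of_nonneg_right this ht.le, inv_mul_cancel₀ (ne_of_gt ht)]

lemma hh_bound : ∀ t ∈ Set.Icc (0:ℝ) 2, |hh t| ≤ 4 := by
  intro t ⟨ht0, ht2⟩
  rcases eq_or_ne t 1 with rfl | hne1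
  · simp [hh]
  rcases le_or_gt t (1/2) with hc | hc
  · -- t ∈ [0, 1/2]
    have hb1 : |1 / (t - 1)| ≤ 2 := by
      rw [abs_div, abs_one]
      rw [div_le_iff₀ (by rw [abs_pos]; intro hz; rw [sub_eq_zero] at hz; linarith)]
      have : |t - 1| = 1 - t := by rw [abs_of_nonpos (by linarith)]; ring
      rw [this]; linarith
    have hb2 : |1 / Real.log t| ≤ 2 := by
      rcases eq_or_lt_of_le ht0 with rfl | ht0'
      · simp
      · have hlt : Real.log t ≤ -Real.log 2 := by
          rw [← Real.log_inv]
          exact Real.log_le_log ht0' (by rw [← one_div]; exact hc)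
        have hl2 : (0.6931471803 : ℝ) < Real.log 2 := Real.log_two_gt_d9
        rw [abs_div, abs_one, div_le_iff₀ (by rw [abs_pos]; intro hz; rw [hz] at hlt; linarith)]
        have : |Real.log t| ≥ Real.log 2 := by
          rw [abs_of_nonpos (by linarith)]; linarith
        linarith
    calc |hh t| ≤ |1 / Real.log t| + |1 / (t - 1)| := abs_sub _ _
    _ ≤ 4 := by linarith
  rcases lt_or_gt_of_ne hne1 with hlt1 | hgt1
  · -- t ∈ (1/2, 1)
    have ht0' : 0 < t := by linarith
    have hlog : Real.log t < 0 := Real.log_neg ht0' hlt1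
    have ht1 : t - 1 < 0 := by linarith
    obtain ⟨hn0, hn1⟩ := num_bounds ht0'
    have hq := hh_quot (ne_of_lt hlog) (ne_of_lt ht1)
    have hdpos : 0 < Real.log t * (t - 1) := mul_pos_of_neg_of_neg hlog ht1
    have hdlow : (t - 1) ^ 2 ≤ Real.log t * (t - 1) := by
      have h1 : Real.log t ≤ t - 1 := Real.log_le_sub_one_of_pos ht0'
      nlinarith
    have hup : hh t ≤ 1 / t := by
      rw [hq]
      have hsq : (0:ℝ) < (t - 1) ^ 2 := by nlinarith
      calc (t - 1 - Real.log t) / (Real.log t * (t - 1))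
          ≤ ((t - 1) ^ 2 / t) / ((t - 1) ^ 2) :=
            div_le_div₀ (by positivity) hn1 hsq hdlow
        _ = 1 / t := by
            rw [div_div, mul_comm t, ← div_div, div_self (ne_of_gt hsq)]
    have hlo : 0 ≤ hh t := by rw [hq]; exact div_nonneg hn0 hdpos.le
    rw [abs_of_nonneg hlo]
    have : 1 / t ≤ 2 := by rw [div_le_iff₀ ht0']; linarith
    linarith
  · -- t ∈ (1, 2]
    have ht0' : 0 < t := by linarith
    have hlog : 0 < Real.log t := Real.log_pos hgt1
    have ht1 : 0 < t - 1 := by linarith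
    obtain ⟨hn0, hn1⟩ := num_bounds ht0'
    have hq := hh_quot (ne_of_gt hlog) (ne_of_gt ht1)
    have hdlow : (t - 1) ^ 2 / t ≤ Real.log t * (t - 1) := by
      have h2 : Real.log t⁻¹ ≤ t⁻¹ - 1 := Real.log_le_sub_one_of_pos (by positivity)
      rw [Real.log_inv] at h2
      have : (t - 1) / t ≤ Real.log t := by
        rw [div_le_iff₀ ht0']
        have := mul_le_mul_of_nonneg_right h2 ht0'.le
        rw [sub_mul, inv_mul_cancel₀ (ne_of_gt ht0')] at this
        nlinarith
      calc (t - 1) ^ 2 / t = (t - 1) / t * (t - 1) := by ring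
        _ ≤ Real.log t * (t - 1) := by
            apply mul_le_mul_of_nonneg_right this ht1.le
    have hup : hh t ≤ 1 := by
      rw [hq]
      have := div_le_div₀ (le_of_lt (by positivity : (0:ℝ) < (t-1)^2/t)) hn1
        (by positivity : (0:ℝ) < (t-1)^2/t) hdlow
      calc (t - 1 - Real.log t) / (Real.log t * (t - 1))
          ≤ ((t - 1) ^ 2 / t) / ((t - 1) ^ 2 / t) := this
        _ = 1 := div_self (by positivity)
    have hlo : 0 ≤ hh t := by
      rw [hq]; exact div_nonneg hn0 (by positivity)
    rw [abs_of_nonneg hlo]; linarith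

lemma hh_measurable : Measurable hh := by
  apply Measurable.sub
  · exact (Real.measurable_log.const_div 1)
  · exact ((measurable_id.sub measurable_const).const_div 1)

lemma hh_integrableOn : MeasureTheory.IntegrableOn hh (Set.Icc (0:ℝ) 2) := by
  refine MeasureTheory.Integrable.mono'
    (f := hh) (g := fun _ : ℝ => (4:ℝ))
    ((MeasureTheory.integrableOn_const_iff).mpr
      (Or.inr (by simp : MeasureTheory.volume (Set.Icc (0:ℝ) 2) < ⊤)))
    hh_measurable.aestronglyMeasurable ?_
  rw [MeasureTheory.ae_restrict_iff' measurableSet_Icc]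
  filter_upwards with t ht
  exact hh_bound t ht

noncomputable def l2 : ℝ := (∫ t in (0:ℝ)..1, hh t) + ∫ t in (1:ℝ)..2, hh t

lemma contOn_one_div_log : ContinuousOn (fun t : ℝ => 1 / Real.log t) {t : ℝ | 1 < t} := by
  intro t ht
  have ht' : (1:ℝ) < t := ht
  apply ContinuousAt.continuousWithinAt
  exact continuousAt_const.div (Real.continuousAt_log (by linarith))
    (ne_of_gt (Real.log_pos ht'))

lemma intInt_log {p q : ℝ} (hp : 1 < p) (hq : 1 < q) :
    IntervalIntegrable (fun t : ℝ => 1 / Real.log t) volume p q := by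
  apply ContinuousOn.intervalIntegrable
  apply contOn_one_div_log.mono
  intro t ht
  rcases le_total p q with hpq | hpq
  · rw [Set.uIcc_of_le hpq] at ht; exact lt_of_lt_of_le hp ht.1
  · rw [Set.uIcc_of_ge hpq] at ht; exact lt_of_lt_of_le hq ht.1

lemma intInt_inv_sub_one {a b : ℝ} (h : ∀ t ∈ Set.uIcc a b, t ≠ 1) :
    IntervalIntegrable (fun t : ℝ => 1 / (t - 1)) volume a b := by
  apply ContinuousOn.intervalIntegrable
  intro t ht
  exact (continuousAt_const.div ((continuous_id.sub continuous_const).continuousAt)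
    (sub_ne_zero.mpr (h t ht))).continuousWithinAt

lemma integral_inv_sub_one {a b : ℝ} (h : ∀ t ∈ Set.uIcc a b, t ≠ 1) :
    ∫ t in a..b, 1 / (t - 1) = Real.log (b - 1) - Real.log (a - 1) := by
  apply integral_eq_sub_of_hasDerivAt
  · intro t ht
    have : HasDerivAt (fun t : ℝ => Real.log (t - 1)) ((t-1)⁻¹ * 1) t :=
      (Real.hasDerivAt_log (sub_ne_zero.mpr (h t ht))).comp (h := fun u : ℝ => u - 1) t
        ((hasDerivAt_id' t).sub_const 1)
    simpa [one_div] using this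
  · exact intInt_inv_sub_one h

lemma hh_II {a b : ℝ} (ha : a ∈ Set.Icc (0:ℝ) 2) (hb : b ∈ Set.Icc (0:ℝ) 2) :
    IntervalIntegrable hh volume a b := by
  rcases le_total a b with hab | hab
  · rw [intervalIntegrable_iff_integrableOn_Icc_of_le hab]
    exact hh_integrableOn.mono_set (Set.Icc_subset_Icc ha.1 hb.2)
  · apply IntervalIntegrable.symm
    rw [intervalIntegrable_iff_integrableOn_Icc_of_le hab]
    exact hh_integrableOn.mono_set (Set.Icc_subset_Icc hb.1 ha.2)

lemma li_eq {x : ℝ} (hx : 1 < x) :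
    li x = l2 + ∫ t in (2:ℝ)..x, 1 / Real.log t := by
  rw [li]
  apply Filter.Tendsto.limUnder_eq
  have hIoo : Set.Ioo (0:ℝ) (1/2) ∈ nhdsWithin (0:ℝ) (Set.Ioi 0) :=
    Ioo_mem_nhdsGT_of_mem (by norm_num)
  -- continuity of primitives
  have huIcc : Set.uIcc (0:ℝ) 2 = Set.Icc 0 2 := Set.uIcc_of_le (by norm_num)
  have cont1 : ContinuousOn (fun u => ∫ t in (0:ℝ)..u, hh t) (Set.uIcc (0:ℝ) 2) :=
    continuousOn_primitive_interval (by rw [huIcc]; exact hh_integrableOn)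
  have cont2 : ContinuousOn (fun u => ∫ t in (1:ℝ)..u, hh t) (Set.uIcc (1:ℝ) 2) := by
    apply continuousOn_primitive_interval
    rw [Set.uIcc_of_le (by norm_num)]
    exact hh_integrableOn.mono_set (Set.Icc_subset_Icc (by norm_num) le_rfl)
  have T1 : Filter.Tendsto (fun ε : ℝ => ∫ t in (0:ℝ)..(1 - ε), hh t)
      (nhdsWithin 0 (Set.Ioi 0)) (nhds (∫ t in (0:ℝ)..1, hh t)) := by
    have hmem : (1:ℝ) ∈ Set.uIcc (0:ℝ) 2 := by rw [huIcc]; constructor <;> norm_num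
    refine ((cont1 1 hmem).tendsto).comp ?_
    apply tendsto_nhdsWithin_of_tendsto_nhds_of_eventually_within
    · have : Filter.Tendsto (fun ε : ℝ => 1 - ε) (nhds (0:ℝ)) (nhds 1) := by
        have := ((continuous_const (y := (1:ℝ))).sub continuous_id).tendsto (0:ℝ)
        simpa [Pi.sub_def] using this
      exact this.mono_left nhdsWithin_le_nhds
    · filter_upwards [hIoo] with ε hε
      rw [huIcc]
      constructor <;> [linarith [hε.2]; linarith [hε.1]]
  have T2 : Filter.Tendsto (fun ε : ℝ => ∫ t in (1:ℝ)..(1 + ε), hh t)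
      (nhdsWithin 0 (Set.Ioi 0)) (nhds 0) := by
    have hmem : (1:ℝ) ∈ Set.uIcc (1:ℝ) 2 := Set.left_mem_uIcc
    have := (cont2 1 hmem).tendsto
    rw [intervalIntegral.integral_same] at this
    refine this.comp ?_
    apply tendsto_nhdsWithin_of_tendsto_nhds_of_eventually_within
    · have : Filter.Tendsto (fun ε : ℝ => 1 + ε) (nhds (0:ℝ)) (nhds 1) := by
        have := ((continuous_const (y := (1:ℝ))).add continuous_id).tendsto (0:ℝ)
        simpa [Pi.add_def] using this
      exact this.mono_left nhdsWithin_le_nhds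
    · filter_upwards [hIoo] with ε hε
      rw [Set.uIcc_of_le (by norm_num)]
      constructor <;> [linarith [hε.1]; linarith [hε.2]]
  have Tmain : Filter.Tendsto
      (fun ε : ℝ => (∫ t in (0:ℝ)..(1 - ε), hh t) + (∫ t in (1:ℝ)..2, hh t)
        - (∫ t in (1:ℝ)..(1 + ε), hh t) + ∫ t in (2:ℝ)..x, 1 / Real.log t)
      (nhdsWithin 0 (Set.Ioi 0))
      (nhds (l2 + ∫ t in (2:ℝ)..x, 1 / Real.log t)) := by
    have : l2 + (∫ t in (2:ℝ)..x, 1 / Real.log t) =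
        (∫ t in (0:ℝ)..1, hh t) + (∫ t in (1:ℝ)..2, hh t) - 0
          + ∫ t in (2:ℝ)..x, 1 / Real.log t := by rw [l2]; ring
    rw [this]
    exact (((T1.add tendsto_const_nhds).sub T2).add tendsto_const_nhds)
  refine Tmain.congr' ?_
  filter_upwards [hIoo] with ε hε
  obtain ⟨hε0, hε2⟩ := hε
  have h1ε : (0:ℝ) ≤ 1 - ε := by linarith
  have key1 : (∫ t in (0:ℝ)..(1 - ε), 1 / Real.log t)
      = Real.log ε + ∫ t in (0:ℝ)..(1 - ε), hh t := by
    have hcongr : ∀ t ∈ Set.uIcc (0:ℝ) (1 - ε), 1 / Real.log t = 1 / (t - 1) + hh t := by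
      intro t _; rw [hh]; ring
    rw [intervalIntegral.integral_congr hcongr]
    have hne : ∀ t ∈ Set.uIcc (0:ℝ) (1 - ε), t ≠ 1 := by
      intro t ht
      rw [Set.uIcc_of_le h1ε] at ht
      intro h; rw [h] at ht; linarith [ht.2]
    rw [intervalIntegral.integral_add (intInt_inv_sub_one hne)
      (hh_II (by constructor <;> norm_num) (by constructor <;> [linarith; linarith]))]
    rw [integral_inv_sub_one hne]
    have : (1 - ε - 1 : ℝ) = -ε := by ring
    rw [this]
    have : (0 - 1 : ℝ) = -1 := by ring
    rw [this, Real.log_neg_eq_log, Real.log_neg_eq_log, Real.log_one, sub_zero]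
  have key2 : (∫ t in (1 + ε)..x, 1 / Real.log t)
      = (∫ t in (1 + ε)..(2:ℝ), 1 / Real.log t) + ∫ t in (2:ℝ)..x, 1 / Real.log t := by
    rw [intervalIntegral.integral_add_adjacent_intervals
      (intInt_log (by linarith) (by norm_num)) (intInt_log (by norm_num) (by linarith))]
  have key3 : (∫ t in (1 + ε)..(2:ℝ), 1 / Real.log t)
      = -Real.log ε + ((∫ t in (1:ℝ)..2, hh t) - ∫ t in (1:ℝ)..(1 + ε), hh t) := by
    have h12 : (1 + ε : ℝ) ≤ 2 := by linarith
    have hcongr : ∀ t ∈ Set.uIcc (1 + ε) (2:ℝ), 1 / Real.log t = 1 / (t - 1) + hh t := by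
      intro t _; rw [hh]; ring
    rw [intervalIntegral.integral_congr hcongr]
    have hne : ∀ t ∈ Set.uIcc (1 + ε) (2:ℝ), t ≠ 1 := by
      intro t ht
      rw [Set.uIcc_of_le h12] at ht
      intro h; rw [h] at ht; linarith [ht.1]
    have hIIhh : IntervalIntegrable hh volume (1 + ε) 2 :=
      hh_II (by constructor <;> [linarith; linarith]) (by constructor <;> norm_num)
    rw [intervalIntegral.integral_add (intInt_inv_sub_one hne) hIIhh]
    rw [integral_inv_sub_one hne]
    have e1 : (1 + ε - 1 : ℝ) = ε := by ring
    have e2 : (2 - 1 : ℝ) = 1 := by norm_num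
    rw [e1, e2, Real.log_one]
    have hsplit : (∫ t in (1:ℝ)..(1 + ε), hh t) + (∫ t in (1 + ε)..(2:ℝ), hh t)
        = ∫ t in (1:ℝ)..2, hh t := by
      apply intervalIntegral.integral_add_adjacent_intervals
      · exact hh_II (by constructor <;> norm_num) (by constructor <;> [linarith; linarith])
      · exact hIIhh
    have : (∫ t in (1 + ε)..(2:ℝ), hh t)
        = (∫ t in (1:ℝ)..2, hh t) - ∫ t in (1:ℝ)..(1 + ε), hh t := by
      rw [← hsplit]; ring
    rw [this]; ring
  rw [key1, key2, key3]; ring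

lemma cast_primeCounting (n : ℕ) :
    ∑ k ∈ Finset.Icc 0 n, (if Nat.Prime k then (1:ℝ) else 0) = Nat.primeCounting n := by
  rw [Finset.sum_boole]
  have h1 : Finset.Icc 0 n = Finset.range (n + 1) := by
    rw [← Finset.Ico_add_one_right_eq_Icc, Nat.Ico_zero_eq_range]
  rw [h1, Nat.primeCounting, Nat.primeCounting', Nat.count_eq_card_filter_range]

lemma Sdiff {s : ℝ} {x y : ℝ} (h2 : 2 ≤ x) (hxy : x ≤ y) :
    (∑ p ∈ (Finset.Iic ⌊y⌋₊).filter Nat.Prime, 1 / (p : ℝ) ^ s)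
      - (∑ p ∈ (Finset.Iic ⌊x⌋₊).filter Nat.Prime, 1 / (p : ℝ) ^ s)
    = y ^ (-s) * primePi y - x ^ (-s) * primePi x
      - ∫ t in x..y, (-s * t ^ (-s - 1)) * primePi t := by
  have hx0 : (0:ℝ) < x := by linarith
  have hd : ∀ t : ℝ, t ∈ Set.Icc x y → HasDerivAt (fun u : ℝ => u ^ (-s))
      (-s * t ^ (-s - 1)) t := by
    intro t ht
    exact Real.hasDerivAt_rpow_const (Or.inl (by intro hz; rw [hz] at ht; exact absurd ht.1 (by linarith)))
  have hderiv_eq : ∀ t ∈ Set.Icc x y, deriv (fun u : ℝ => u ^ (-s)) t = -s * t ^ (-s - 1) :=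
    fun t ht => (hd t ht).deriv
  have hcont : ContinuousOn (fun t : ℝ => -s * t ^ (-s - 1)) (Set.Icc x y) := by
    intro t ht
    exact (continuousAt_const.mul (Real.continuousAt_rpow_const t _
      (Or.inl (by intro hz; rw [hz] at ht; exact absurd ht.1 (by linarith))))).continuousWithinAt
  have hf_int : IntegrableOn (deriv (fun u : ℝ => u ^ (-s))) (Set.Icc x y) := by
    apply (hcont.integrableOn_Icc).congr_fun ?_ measurableSet_Icc
    intro t ht
    exact (hderiv_eq t ht).symm
  have habel := sum_mul_eq_sub_sub_integral_mul
    (fun k => if Nat.Prime k then (1:ℝ) else 0) (f := fun u : ℝ => u ^ (-s))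
    (by linarith : (0:ℝ) ≤ x) hxy
    (fun t ht => (hd t ht).differentiableAt) hf_int
  -- rewrite both sides
  have hxfl : (2:ℕ) ≤ ⌊x⌋₊ := by
    rw [Nat.le_floor_iff (by linarith)]; exact_mod_cast h2
  have hsum_left : ∑ k ∈ Ioc ⌊x⌋₊ ⌊y⌋₊, (k : ℝ) ^ (-s) * (if Nat.Prime k then (1:ℝ) else 0)
      = (∑ p ∈ (Finset.Iic ⌊y⌋₊).filter Nat.Prime, 1 / (p : ℝ) ^ s)
        - (∑ p ∈ (Finset.Iic ⌊x⌋₊).filter Nat.Prime, 1 / (p : ℝ) ^ s) := by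
    have hfl : ⌊x⌋₊ ≤ ⌊y⌋₊ := Nat.floor_le_floor hxy
    have hunion : Finset.Iic ⌊x⌋₊ ∪ Finset.Ioc ⌊x⌋₊ ⌊y⌋₊ = Finset.Iic ⌊y⌋₊ := by
      apply Finset.coe_injective
      push_cast [Finset.coe_union]
      exact Set.Iic_union_Ioc_eq_Iic hfl
    have hdisj : Disjoint (Finset.Iic ⌊x⌋₊) (Finset.Ioc ⌊x⌋₊ ⌊y⌋₊) := by
      rw [Finset.disjoint_left]
      intro a ha ha'
      simp only [Finset.mem_Iic] at ha
      simp only [Finset.mem_Ioc] at ha'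
      omega
    have := Finset.sum_union (f := fun p => 1 / (p:ℝ) ^ s)
      (Finset.disjoint_filter_filter hdisj) (s₁ := (Finset.Iic ⌊x⌋₊).filter Nat.Prime)
      (s₂ := (Finset.Ioc ⌊x⌋₊ ⌊y⌋₊).filter Nat.Prime)
    rw [← Finset.filter_union, hunion] at this
    rw [this]
    rw [add_sub_cancel_left]
    rw [Finset.sum_filter]
    apply Finset.sum_congr rfl
    intro k hk
    simp only [Finset.mem_Ioc] at hk
    have hk0 : 0 < k := by omega
    by_cases hp : Nat.Prime k
    · simp only [hp, if_true, mul_one]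
      rw [Real.rpow_neg (by positivity), one_div]
    · simp [hp]
  rw [hsum_left] at habel
  rw [habel]
  have hWx : (∑ k ∈ Icc 0 ⌊x⌋₊, (if Nat.Prime k then (1:ℝ) else 0)) = primePi x :=
    cast_primeCounting _
  have hWy : (∑ k ∈ Icc 0 ⌊y⌋₊, (if Nat.Prime k then (1:ℝ) else 0)) = primePi y :=
    cast_primeCounting _
  rw [hWx, hWy]
  congr 1
  rw [intervalIntegral.integral_of_le hxy]
  apply setIntegral_congr_fun measurableSet_Ioc
  intro t ht
  have ht' : t ∈ Set.Icc x y := Set.Ioc_subset_Icc_self ht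
  show deriv (fun u : ℝ => u ^ (-s)) t * (∑ k ∈ Icc 0 ⌊t⌋₊, (if Nat.Prime k then (1:ℝ) else 0))
    = -s * t ^ (-s - 1) * primePi t
  rw [hderiv_eq t ht', cast_primeCounting]
  rfl


lemma hasDerivAt_li {t : ℝ} (ht : 1 < t) : HasDerivAt li (1 / Real.log t) t := by
  have hopen : IsOpen {u : ℝ | 1 < u} := isOpen_lt continuous_const continuous_id
  have hnice : HasDerivAt (fun u : ℝ => l2 + ∫ w in (2:ℝ)..u, 1 / Real.log w)
      (1 / Real.log t) t := by
    refine (HasDerivAt.const_add l2 ?_)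
    refine integral_hasDerivAt_right (intInt_log one_lt_two ht) ?_ ?_
    · exact contOn_one_div_log.stronglyMeasurableAtFilter hopen t ht
    · exact contOn_one_div_log.continuousAt (hopen.mem_nhds ht)
  refine hnice.congr_of_eventuallyEq ?_
  filter_upwards [hopen.mem_nhds ht] with u hu
  exact li_eq hu

lemma li_parts {s : ℝ} {x y : ℝ} (h2 : 2 ≤ x) (hxy : x ≤ y) :
    y ^ (-s) * li y - x ^ (-s) * li x
      = ∫ t in x..y, ((-s * t ^ (-s - 1)) * li t + t ^ (-s) * (1 / Real.log t)) := by
  have hmem : ∀ t ∈ Set.uIcc x y, 1 < t := by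
    intro t ht
    rw [Set.uIcc_of_le hxy] at ht
    linarith [ht.1]
  symm
  apply integral_eq_sub_of_hasDerivAt
  · intro t ht
    have ht1 := hmem t ht
    have ht0 : t ≠ 0 := by intro hz; rw [hz] at ht1; linarith
    exact (Real.hasDerivAt_rpow_const (p := -s) (Or.inl ht0)).mul (hasDerivAt_li ht1)
  · apply ContinuousOn.intervalIntegrable
    intro t ht
    have ht1 := hmem t ht
    have ht0 : t ≠ 0 := by intro hz; rw [hz] at ht1; linarith
    have c1 : ContinuousAt (fun u : ℝ => -s * u ^ (-s - 1)) t :=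
      continuousAt_const.mul (Real.continuousAt_rpow_const t _ (Or.inl ht0))
    have c2 : ContinuousAt li t := (hasDerivAt_li ht1).continuousAt
    have c3 : ContinuousAt (fun u : ℝ => u ^ (-s)) t :=
      Real.continuousAt_rpow_const t _ (Or.inl ht0)
    have c4 : ContinuousAt (fun u : ℝ => 1 / Real.log u) t :=
      contOn_one_div_log.continuousAt
        ((isOpen_lt continuous_const continuous_id).mem_nhds ht1)
    exact ((c1.mul c2).add (c3.mul c4)).continuousWithinAt

lemma F_parts {s : ℝ} (hs' : s ≠ 1) {x y : ℝ} (h2 : 2 ≤ x) (hxy : x ≤ y) :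
    expIntE1Ext ((s - 1) * Real.log y) - expIntE1Ext ((s - 1) * Real.log x)
      = ∫ t in x..y, -(t ^ (-s)) / Real.log t := by
  have hmem : ∀ t ∈ Set.uIcc x y, 1 < t := by
    intro t ht
    rw [Set.uIcc_of_le hxy] at ht
    linarith [ht.1]
  symm
  apply integral_eq_sub_of_hasDerivAt
  · intro t ht
    exact hasDerivAt_F hs' (hmem t ht)
  · apply ContinuousOn.intervalIntegrable
    intro t ht
    have ht1 := hmem t ht
    have ht0 : t ≠ 0 := by intro hz; rw [hz] at ht1; linarith
    have c3 : ContinuousAt (fun u : ℝ => -(u ^ (-s))) t :=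
      (Real.continuousAt_rpow_const t _ (Or.inl ht0)).neg
    have c4 : ContinuousAt Real.log t := Real.continuousAt_log (by linarith)
    exact (c3.div c4 (ne_of_gt (Real.log_pos ht1))).continuousWithinAt

lemma primePi_measurable : Measurable primePi := by
  have : Monotone primePi := by
    intro a b hab
    simp only [primePi]
    exact_mod_cast Nat.monotone_primeCounting (Nat.floor_le_floor hab)
  exact this.measurable

lemma intInt_pi {s : ℝ} (hs0 : 0 < s) {x y : ℝ} (h2 : 2 ≤ x) (hxy : x ≤ y) :
    IntervalIntegrable (fun t : ℝ => (-s * t ^ (-s - 1)) * primePi t) volume x y := by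
  rw [intervalIntegrable_iff_integrableOn_Icc_of_le hxy]
  have hx0 : (0:ℝ) < x := by linarith
  refine Integrable.mono' (g := fun _ : ℝ => (s * x ^ (-s - 1)) * primePi y)
    ((integrableOn_const_iff).mpr (Or.inr (by simp : volume (Set.Icc x y) < ⊤)))
    ?_ ?_
  · apply AEStronglyMeasurable.mul ?_ primePi_measurable.aestronglyMeasurable
    apply ContinuousOn.aestronglyMeasurable ?_ measurableSet_Icc
    intro t ht
    have ht0 : t ≠ 0 := by intro hz; rw [hz] at ht; linarith [ht.1]
    exact (continuousAt_const.mul (Real.continuousAt_rpow_const t _ (Or.inl ht0))).continuousWithinAt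
  · rw [ae_restrict_iff' measurableSet_Icc]
    filter_upwards with t ht
    have ht0 : (0:ℝ) < t := by linarith [ht.1]
    have hpi0 : (0:ℝ) ≤ primePi t := Nat.cast_nonneg _
    have hpiy : primePi t ≤ primePi y := by
      simp only [primePi]
      exact_mod_cast Nat.monotone_primeCounting (Nat.floor_le_floor ht.2)
    have htp : (0:ℝ) < t ^ (-s - 1) := Real.rpow_pos_of_pos ht0 _
    have hxp : (0:ℝ) < x ^ (-s - 1) := Real.rpow_pos_of_pos hx0 _
    have hrle : t ^ (-s - 1) ≤ x ^ (-s - 1) :=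
      Real.rpow_le_rpow_of_nonpos hx0 ht.1 (by linarith)
    rw [Real.norm_eq_abs, abs_mul, abs_mul, abs_of_nonneg hpi0, abs_of_neg (by linarith : -s < 0),
      abs_of_pos htp]
    have h1 : s * t ^ (-s - 1) ≤ s * x ^ (-s - 1) :=
      mul_le_mul_of_nonneg_left hrle hs0.le
    have h2 : (0:ℝ) ≤ s * x ^ (-s - 1) := by positivity
    rw [neg_neg]
    exact mul_le_mul h1 hpiy hpi0 h2


lemma intInt_li {s : ℝ} {x y : ℝ} (h2 : 2 ≤ x) (hxy : x ≤ y) :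
    IntervalIntegrable (fun t : ℝ => (-s * t ^ (-s - 1)) * li t) volume x y := by
  apply ContinuousOn.intervalIntegrable
  intro t ht
  rw [Set.uIcc_of_le hxy] at ht
  have ht1 : (1:ℝ) < t := by linarith [ht.1]
  have ht0 : t ≠ 0 := by intro hz; rw [hz] at ht1; linarith
  exact ((continuousAt_const.mul (Real.continuousAt_rpow_const t _ (Or.inl ht0))).mul
    (hasDerivAt_li ht1).continuousAt).continuousWithinAt

lemma intInt_B {s : ℝ} {x y : ℝ} (h2 : 2 ≤ x) (hxy : x ≤ y) :
    IntervalIntegrable (fun t : ℝ => t ^ (-s) * (1 / Real.log t)) volume x y := by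
  apply ContinuousOn.intervalIntegrable
  intro t ht
  rw [Set.uIcc_of_le hxy] at ht
  have ht1 : (1:ℝ) < t := by linarith [ht.1]
  have ht0 : t ≠ 0 := by intro hz; rw [hz] at ht1; linarith
  exact ((Real.continuousAt_rpow_const t _ (Or.inl ht0)).mul
    (contOn_one_div_log.continuousAt
      ((isOpen_lt continuous_const continuous_id).mem_nhds ht1))).continuousWithinAt

lemma intInt_E {s : ℝ} (hs0 : 0 < s) {x y : ℝ} (h2 : 2 ≤ x) (hxy : x ≤ y) :
    IntervalIntegrable (fun t : ℝ => (-s * t ^ (-s - 1)) * EE t) volume x y := by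
  have := (intInt_pi hs0 h2 hxy).sub (intInt_li (s := s) h2 hxy)
  apply this.congr
  intro t _
  simp only [EE]; ring

lemma Gdiff {s : ℝ} (hs0 : 0 < s) (hs' : s ≠ 1) {x y : ℝ} (h2 : 2 ≤ x) (hxy : x ≤ y) :
    G s y - G s x = y ^ (-s) * EE y - x ^ (-s) * EE x
      - ∫ t in x..y, (-s * t ^ (-s - 1)) * EE t := by
  have hGsplit : G s y - G s x =
      ((∑ p ∈ (Finset.Iic ⌊y⌋₊).filter Nat.Prime, 1 / (p : ℝ) ^ s)
        - (∑ p ∈ (Finset.Iic ⌊x⌋₊).filter Nat.Prime, 1 / (p : ℝ) ^ s))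
      + (expIntE1Ext ((s - 1) * Real.log y) - expIntE1Ext ((s - 1) * Real.log x)) := by
    rw [G, G]; ring
  rw [hGsplit, Sdiff h2 hxy, F_parts hs' h2 hxy]
  have hFneg : (∫ t in x..y, -(t ^ (-s)) / Real.log t)
      = -∫ t in x..y, t ^ (-s) * (1 / Real.log t) := by
    rw [← intervalIntegral.integral_neg]
    apply intervalIntegral.integral_congr
    intro t _
    ring
  rw [hFneg]
  have hli := li_parts (s := s) h2 hxy
  rw [intervalIntegral.integral_add (intInt_li h2 hxy) (intInt_B h2 hxy)] at hli
  have hB : (∫ t in x..y, t ^ (-s) * (1 / Real.log t))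
      = (y ^ (-s) * li y - x ^ (-s) * li x)
        - ∫ t in x..y, (-s * t ^ (-s - 1)) * li t := by
    rw [hli]; ring
  rw [hB]
  have hEint : (∫ t in x..y, (-s * t ^ (-s - 1)) * EE t)
      = (∫ t in x..y, (-s * t ^ (-s - 1)) * primePi t)
        - ∫ t in x..y, (-s * t ^ (-s - 1)) * li t := by
    rw [← intervalIntegral.integral_sub (intInt_pi hs0 h2 hxy) (intInt_li h2 hxy)]
    apply intervalIntegral.integral_congr
    intro t _
    simp only [EE]; ring
  rw [hEint]
  simp only [EE]
  ring



lemma log_le_rpow {b t : ℝ} (hb : 0 < b) (ht : 1 ≤ t) : Real.log t ≤ t ^ b / b := by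
  have ht0 : (0:ℝ) < t := by linarith
  have h1 : Real.log (t ^ b) ≤ t ^ b - 1 := Real.log_le_sub_one_of_pos (by positivity)
  rw [Real.log_rpow ht0] at h1
  have h2 : b * Real.log t ≤ t ^ b := by linarith [Real.rpow_pos_of_pos ht0 b]
  rw [le_div_iff₀ hb]
  linarith [h2, mul_comm b (Real.log t)]

lemma Gbound {C s : ℝ}
    (h : ∀ x ≥ (2 : ℝ), |primePi x - li x| ≤ C * Real.sqrt x * Real.log x)
    (hs : 1 / 2 < s) (hs' : s ≠ 1) {x y : ℝ} (h2 : 2 ≤ x) (hxy : x ≤ y) :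
    |G s y - G s x| ≤
      (2 * C / ((s - 1/2)/2) + s * C / ((s - 1/2)/2) ^ 2) * x ^ (-((s - 1/2)/2)) := by
  set b : ℝ := (s - 1/2)/2 with hbdef
  have hb : 0 < b := by rw [hbdef]; linarith
  have hs0 : (0:ℝ) < s := by linarith
  have hC : 0 ≤ C := by
    have := h 2 le_rfl
    have hl2 : (0:ℝ) < Real.log 2 := Real.log_pos one_lt_two
    have hs2 : (0:ℝ) < Real.sqrt 2 := Real.sqrt_pos.mpr (by norm_num)
    by_contra hC
    push_neg at hC
    have hneg : C * Real.sqrt 2 * Real.log 2 < 0 := by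
      have hp := mul_pos hs2 hl2
      nlinarith
    linarith [abs_nonneg (primePi 2 - li 2)]
  have hx0 : (0:ℝ) < x := by linarith
  have hy0 : (0:ℝ) < y := by linarith
  -- key pointwise bound on EE
  have hEE : ∀ t : ℝ, 2 ≤ t → |EE t| ≤ C / b * t ^ ((1:ℝ)/2 + b) := by
    intro t ht
    have ht0 : (0:ℝ) < t := by linarith
    have h1 : |EE t| ≤ C * Real.sqrt t * Real.log t := h t ht
    have hsq : Real.sqrt t = t ^ ((1:ℝ)/2) := Real.sqrt_eq_rpow t
    have hlog : Real.log t ≤ t ^ b / b := log_le_rpow hb (by linarith)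
    have hlog0 : 0 ≤ Real.log t := Real.log_nonneg (by linarith)
    calc |EE t| ≤ C * Real.sqrt t * Real.log t := h1
      _ ≤ C * Real.sqrt t * (t ^ b / b) := by
          apply mul_le_mul_of_nonneg_left hlog (by positivity)
      _ = C / b * (t ^ ((1:ℝ)/2) * t ^ b) := by rw [hsq]; ring
      _ = C / b * t ^ ((1:ℝ)/2 + b) := by rw [← Real.rpow_add ht0]
  -- boundary bounds
  have hbdry : ∀ t : ℝ, 2 ≤ t → |t ^ (-s) * EE t| ≤ C / b * t ^ (-b) := by
    intro t ht
    have ht0 : (0:ℝ) < t := by linarith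
    have htp : (0:ℝ) < t ^ (-s) := Real.rpow_pos_of_pos ht0 _
    rw [abs_mul, abs_of_pos htp]
    calc t ^ (-s) * |EE t| ≤ t ^ (-s) * (C / b * t ^ ((1:ℝ)/2 + b)) :=
          mul_le_mul_of_nonneg_left (hEE t ht) htp.le
      _ = C / b * (t ^ (-s) * t ^ ((1:ℝ)/2 + b)) := by ring
      _ = C / b * t ^ (-b) := by
          rw [← Real.rpow_add ht0]
          congr 1
          rw [hbdef]; ring
  -- integral bound
  have hint := intInt_E hs0 h2 hxy
  have hpsi_cont : ContinuousOn (fun t : ℝ => s * C / b * t ^ (-1 - b)) (Set.uIcc x y) := by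
    intro t ht
    rw [Set.uIcc_of_le hxy] at ht
    have ht0 : t ≠ 0 := by intro hz; rw [hz] at ht; linarith [ht.1]
    exact (continuousAt_const.mul (Real.continuousAt_rpow_const t _ (Or.inl ht0))).continuousWithinAt
  have hpsi_int : IntervalIntegrable (fun t : ℝ => s * C / b * t ^ (-1 - b)) volume x y :=
    hpsi_cont.intervalIntegrable
  have hptwise : ∀ t ∈ Set.Icc x y, |(-s * t ^ (-s - 1)) * EE t| ≤ s * C / b * t ^ (-1 - b) := by
    intro t ht
    have ht2 : 2 ≤ t := le_trans h2 ht.1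
    have ht0 : (0:ℝ) < t := by linarith
    have htp : (0:ℝ) < t ^ (-s - 1) := Real.rpow_pos_of_pos ht0 _
    rw [abs_mul, abs_mul, abs_of_neg (by linarith : -s < 0), abs_of_pos htp, neg_neg]
    calc s * t ^ (-s - 1) * |EE t| ≤ s * t ^ (-s - 1) * (C / b * t ^ ((1:ℝ)/2 + b)) := by
          apply mul_le_mul_of_nonneg_left (hEE t ht2) (by positivity)
      _ = s * C / b * (t ^ (-s - 1) * t ^ ((1:ℝ)/2 + b)) := by ring
      _ = s * C / b * t ^ (-1 - b) := by
          rw [← Real.rpow_add ht0]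
          congr 1
          rw [hbdef]; ring
  have hintbound : |∫ t in x..y, (-s * t ^ (-s - 1)) * EE t|
      ≤ ∫ t in x..y, s * C / b * t ^ (-1 - b) := by
    calc |∫ t in x..y, (-s * t ^ (-s - 1)) * EE t|
        ≤ ∫ t in x..y, |(-s * t ^ (-s - 1)) * EE t| :=
          intervalIntegral.abs_integral_le_integral_abs hxy
      _ ≤ ∫ t in x..y, s * C / b * t ^ (-1 - b) := by
          apply intervalIntegral.integral_mono_on hxy hint.abs hpsi_int
          exact hptwise
  have hintval : (∫ t in x..y, s * C / b * t ^ (-1 - b))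
      = s * C / b ^ 2 * (x ^ (-b) - y ^ (-b)) := by
    have : ∀ t ∈ Set.uIcc x y, HasDerivAt (fun u : ℝ => -(s * C / b ^ 2) * u ^ (-b))
        (s * C / b * t ^ (-1 - b)) t := by
      intro t ht
      rw [Set.uIcc_of_le hxy] at ht
      have ht0 : t ≠ 0 := by intro hz; rw [hz] at ht; linarith [ht.1]
      have := (Real.hasDerivAt_rpow_const (p := -b) (Or.inl ht0)).const_mul (-(s * C / b ^ 2))
      refine this.congr_deriv ?_
      have : (-b - 1 : ℝ) = -1 - b := by ring
      rw [this]
      field_simp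
    rw [integral_eq_sub_of_hasDerivAt this hpsi_int]
    ring
  have hyb : y ^ (-b) ≤ x ^ (-b) := Real.rpow_le_rpow_of_nonpos hx0 hxy (by linarith)
  have hyb0 : (0:ℝ) ≤ y ^ (-b) := (Real.rpow_pos_of_pos hy0 _).le
  have hGd := Gdiff hs0 hs' h2 hxy
  rw [hGd]
  have hb1 := hbdry x h2
  have hb2 := hbdry y (le_trans h2 hxy)
  calc |y ^ (-s) * EE y - x ^ (-s) * EE x - ∫ t in x..y, (-s * t ^ (-s - 1)) * EE t|
      ≤ |y ^ (-s) * EE y| + |x ^ (-s) * EE x| + |∫ t in x..y, (-s * t ^ (-s - 1)) * EE t| := by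
        have := abs_sub (y ^ (-s) * EE y - x ^ (-s) * EE x)
          (∫ t in x..y, (-s * t ^ (-s - 1)) * EE t)
        have h' := abs_sub (y ^ (-s) * EE y) (x ^ (-s) * EE x)
        linarith
    _ ≤ C / b * y ^ (-b) + C / b * x ^ (-b) + s * C / b ^ 2 * (x ^ (-b) - y ^ (-b)) := by
        rw [← hintval]
        linarith [hb1, hb2, hintbound]
    _ ≤ (2 * C / b + s * C / b ^ 2) * x ^ (-b) := by
        have hcb : 0 ≤ C / b := by positivity
        have h1 : C / b * y ^ (-b) ≤ C / b * x ^ (-b) := mul_le_mul_of_nonneg_left hyb hcb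
        have h2' : s * C / b ^ 2 * (x ^ (-b) - y ^ (-b)) ≤ s * C / b ^ 2 * x ^ (-b) := by
          apply mul_le_mul_of_nonneg_left _ (by positivity)
          linarith
        have : 2 * C / b = C / b + C / b := by ring
        nlinarith [h1, h2']

end PZA

theorem primeZeta_continuation (C : ℝ)
    (h : ∀ x ≥ (2 : ℝ), |primePi x - li x| ≤ C * Real.sqrt x * Real.log x)
    (s : ℝ) (hs : 1 / 2 < s) (hs' : s ≠ 1) :
    ∃ L : ℝ, Filter.Tendsto
      (fun x : ℝ =>
        (∑ p ∈ (Finset.Iic ⌊x⌋₊).filter Nat.Prime, 1 / (p : ℝ) ^ s) +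
          expIntE1Ext ((s - 1) * Real.log x))
      Filter.atTop (nhds L) := by
  show ∃ L : ℝ, Filter.Tendsto (PZA.G s) Filter.atTop (nhds L)
  set b : ℝ := (s - 1/2)/2 with hbdef
  have hb : 0 < b := by rw [hbdef]; linarith
  set K : ℝ := 2 * C / b + s * C / b ^ 2 with hKdef
  apply cauchySeq_tendsto_of_complete
  rw [Metric.cauchySeq_iff]
  intro ε hε
  have htend : Filter.Tendsto (fun x : ℝ => K * x ^ (-b)) Filter.atTop (nhds 0) := by
    have := tendsto_rpow_neg_atTop hb
    have := this.const_mul K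
    simpa using this
  have hev : ∀ᶠ x : ℝ in Filter.atTop, |K * x ^ (-b)| < ε := by
    have := htend.eventually (eventually_abs_sub_lt 0 hε)
    simpa using this
  obtain ⟨N, hN⟩ := (hev.and (Filter.eventually_ge_atTop (2:ℝ))).exists_forall_of_atTop
  refine ⟨N, fun m hm n hn => ?_⟩
  obtain ⟨hNε, hN2⟩ := hN N le_rfl
  have key : ∀ p q : ℝ, N ≤ p → p ≤ q → dist (PZA.G s q) (PZA.G s p) < ε := by
    intro p q hp hpq
    rw [Real.dist_eq]
    have h2p : 2 ≤ p := le_trans hN2 hp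
    have hb1 : |PZA.G s q - PZA.G s p| ≤ K * p ^ (-b) := PZA.Gbound h hs hs' h2p hpq
    have hple : K * p ^ (-b) ≤ K * N ^ (-b) := by
      rcases le_or_gt 0 K with hK0 | hK0
      · apply mul_le_mul_of_nonneg_left _ hK0
        exact Real.rpow_le_rpow_of_nonpos (by linarith) hp (by linarith)
      · have := abs_nonneg (PZA.G s q - PZA.G s p)
        have hp0 : (0:ℝ) < p ^ (-b) := Real.rpow_pos_of_pos (by linarith) _
        nlinarith [le_trans this hb1]
    calc |PZA.G s q - PZA.G s p| ≤ K * N ^ (-b) := le_trans hb1 hple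
      _ ≤ |K * N ^ (-b)| := le_abs_self _
      _ < ε := hNε
  rcases le_total m n with hmn | hmn
  · rw [dist_comm]; exact key m n hm hmn
  · exact key n m hn hmn
end
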